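/- arXiv:1310.0904 — 4 statements merged into one kernel-verified Lean document; each statement's English description precedes it below -/
import Mathlib

section
/- (Sylvester–Gallai) Given a finite set S of points in the real plane R^2, either all points of S are collinear, or there exist two points of S such that the line through them contains no other point of S. -/
open EuclideanGeometry Metric AffineMap RealInnerProductSpace

section helpers

variable {W : Type*} [AddCommGroup W] [Module ℝ W]

/-- Membership in the line through two points, in a vector space. -/
lemma sg_mem_line_iff (a b x : W) :
    x ∈ line[ℝ, a, b] ↔ ∃ r : ℝ, r • (b - a) = x - a := by
  constructor
  · intro h
    have h' : (x - a) +ᵥ a ∈ line[ℝ, a, b] := by simpa using h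
    have := vadd_left_mem_affineSpan_pair.1 h'
    simpa using this
  · rintro ⟨r, hr⟩
    have := vadd_left_mem_affineSpan_pair (k := ℝ) (p₁ := a) (p₂ := b) (v := x - a)
    have h' := this.2 ⟨r, by simpa using hr⟩
    simpa using h'

variable {W₂ : Type*} [AddCommGroup W₂] [Module ℝ W₂]

lemma sg_line_equiv (e : W ≃ₗ[ℝ] W₂) (a b x : W) :
    x ∈ line[ℝ, a, b] ↔ e x ∈ line[ℝ, e a, e b] := by
  simp only [sg_mem_line_iff]
  constructor
  · rintro ⟨r, hr⟩
    exact ⟨r, by rw [← map_sub, ← map_sub, ← map_smul, hr]⟩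
  · rintro ⟨r, hr⟩
    refine ⟨r, ?_⟩
    have := congrArg e.symm hr
    simpa [map_smul, map_sub] using this

lemma sg_collinear_equiv (e : W ≃ₗ[ℝ] W₂) {s : Set W} (h : Collinear ℝ (e '' s)) :
    Collinear ℝ s := by
  rw [collinear_iff_exists_forall_eq_smul_vadd] at h ⊢
  obtain ⟨p₀, v, h⟩ := h
  refine ⟨e.symm p₀, e.symm v, fun x hx => ?_⟩
  obtain ⟨r, hr⟩ := h (e x) ⟨x, hx, rfl⟩
  refine ⟨r, ?_⟩
  have := congrArg e.symm hr
  simpa [map_add, map_smul, vadd_eq_add] using this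

lemma sg_ratio {x y : ℝ} (h0 : 0 ≤ x) (hxy : x < y) :
    ∃ s : ℝ, 0 ≤ s ∧ s < 1 ∧ x = s * y := by
  have hy : 0 < y := lt_of_le_of_lt h0 hxy
  exact ⟨x / y, div_nonneg h0 hy.le, (div_lt_one hy).2 hxy,
    (div_mul_cancel₀ x hy.ne').symm⟩

lemma sg_same_sign {x y : ℝ} (hxy : x ≠ y)
    (hsign : 0 ≤ x ∧ 0 ≤ y ∨ x ≤ 0 ∧ y ≤ 0) :
    (∃ s : ℝ, 0 ≤ s ∧ s < 1 ∧ x = s * y) ∨ (∃ s : ℝ, 0 ≤ s ∧ s < 1 ∧ y = s * x) := by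
  rcases hsign with ⟨hx, hy⟩ | ⟨hx, hy⟩
  · rcases lt_or_gt_of_ne hxy with h | h
    · exact Or.inl (sg_ratio hx h)
    · exact Or.inr (sg_ratio hy h)
  · have hxy' : (-x) ≠ (-y) := fun h => hxy (by linarith)
    rcases lt_or_gt_of_ne hxy' with h | h
    · obtain ⟨s, h1, h2, h3⟩ := sg_ratio (by linarith : (0:ℝ) ≤ -x) h
      rw [mul_neg] at h3
      exact Or.inl ⟨s, h1, h2, by linarith⟩
    · obtain ⟨s, h1, h2, h3⟩ := sg_ratio (by linarith : (0:ℝ) ≤ -y) h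
      rw [mul_neg] at h3
      exact Or.inr ⟨s, h1, h2, by linarith⟩

end helpers

section kelly

variable {V : Type*} [NormedAddCommGroup V] [InnerProductSpace ℝ V] [FiniteDimensional ℝ V]

/-- Kelly's step: given a point `p` off the line `L = line[a,b]` and a third point `c` on `L`,
there is a new point/line pair from among the four points at strictly smaller distance. -/
lemma sg_kelly_step {p a b c : V} (hab : a ≠ b) (hp : p ∉ line[ℝ, a, b])
    (hc : c ∈ line[ℝ, a, b]) (hca : c ≠ a) (hcb : c ≠ b) :
    ∃ u v : V, u ∈ ({a, b, c} : Set V) ∧ v ∈ ({a, b, c} : Set V) ∧ p ≠ v ∧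
      u ∉ line[ℝ, p, v] ∧
      infDist u (line[ℝ, p, v] : Set V) < infDist p (line[ℝ, a, b] : Set V) := by
  classical
  set L : AffineSubspace ℝ V := line[ℝ, a, b] with hL
  haveI : Nonempty L := ⟨⟨a, left_mem_affineSpan_pair ℝ a b⟩⟩
  haveI : CompleteSpace L.direction := FiniteDimensional.complete ℝ _
  set q : V := ↑(EuclideanGeometry.orthogonalProjection L p) with hq
  have hqL : q ∈ L := EuclideanGeometry.orthogonalProjection_mem p
  have hpq : p ≠ q := fun h => hp (h ▸ hqL)
  set d : V := a - b with hd
  have hdir : L.direction = ℝ ∙ d := by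
    rw [hL, direction_affineSpan, vectorSpan_pair]
    simp [hd]
  -- parametrize points of L
  have param : ∀ x, x ∈ L → ∃ t : ℝ, x = t • d + q := by
    intro x hx
    have hx' : x - q ∈ L.direction := by
      simpa [vsub_eq_sub] using AffineSubspace.vsub_mem_direction hx hqL
    rw [hdir, Submodule.mem_span_singleton] at hx'
    obtain ⟨t, ht⟩ := hx'
    exact ⟨t, by rw [ht]; abel⟩
  have haL : a ∈ L := left_mem_affineSpan_pair ℝ a b
  have hbL : b ∈ L := right_mem_affineSpan_pair ℝ a b
  obtain ⟨ta, hta⟩ := param a haL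
  obtain ⟨tb, htb⟩ := param b hbL
  obtain ⟨tc, htc⟩ := param c hc
  have tinj : ∀ (tx ty : ℝ) (x y : V), x = tx • d + q → y = ty • d + q → x ≠ y → tx ≠ ty := by
    intro tx ty x y hx hy hne h
    exact hne (by rw [hx, hy, h])
  -- `dist p q ≤ infDist p L`
  have hminL : ∀ z ∈ L, dist p q ≤ dist p z := by
    intro z hz
    have py := dist_sq_eq_dist_orthogonalProjection_sq_add_dist_orthogonalProjection_sq
      (s := L) p hz
    rw [← hq] at py
    have h1 : (0:ℝ) ≤ dist z q := dist_nonneg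
    have h2 : (0:ℝ) ≤ dist p q := dist_nonneg
    have h3 : (0:ℝ) ≤ dist p z := dist_nonneg
    nlinarith [dist_comm p z, dist_comm z p]
  have hle : dist p q ≤ infDist p (L : Set V) := by
    by_contra hlt'
    rw [not_le] at hlt'
    obtain ⟨z, hzL, hdz⟩ := (infDist_lt_iff ⟨q, hqL⟩).1 hlt'
    exact absurd hdz (not_lt.2 (hminL z hzL))
  -- the core construction
  have core : ∀ x y : V, x ∈ ({a, b, c} : Set V) → y ∈ ({a, b, c} : Set V) → x ≠ y →
      ∀ tx ty : ℝ, x = tx • d + q → y = ty • d + q →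
      (∃ s : ℝ, 0 ≤ s ∧ s < 1 ∧ tx = s * ty) →
      ∃ u v : V, u ∈ ({a, b, c} : Set V) ∧ v ∈ ({a, b, c} : Set V) ∧ p ≠ v ∧
        u ∉ line[ℝ, p, v] ∧
        infDist u (line[ℝ, p, v] : Set V) < infDist p (L : Set V) := by
    intro x y hxmem hymem hxy tx ty hx hy ⟨s, hs0, hs1, hs⟩
    have hmemL : ∀ z : V, z ∈ ({a, b, c} : Set V) → z ∈ L := by
      intro z hz
      rcases hz with rfl | rfl | rfl
      · exact haL
      · exact hbL
      · exact hc
    have hxL : x ∈ L := hmemL x hxmem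
    have hyL : y ∈ L := hmemL y hymem
    have hpy : p ≠ y := fun h => hp (h ▸ hyL)
    set M : AffineSubspace ℝ V := line[ℝ, p, y] with hM
    haveI : Nonempty M := ⟨⟨p, left_mem_affineSpan_pair ℝ p y⟩⟩
    haveI : CompleteSpace M.direction := FiniteDimensional.complete ℝ _
    have hpM : p ∈ M := left_mem_affineSpan_pair ℝ p y
    have hyM : y ∈ M := right_mem_affineSpan_pair ℝ p y
    -- x is not on M
    have hxM : x ∉ M := by
      intro hxM
      have hcol : Collinear ℝ ({x, y, p} : Set V) :=
        collinear_triple_of_mem_affineSpan_pair hxM hyM hpM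
      have hpline : p ∈ line[ℝ, x, y] :=
        hcol.mem_affineSpan_of_mem_of_ne (by simp) (by simp) (by simp) hxy
      have : line[ℝ, x, y] ≤ L := affineSpan_pair_le_of_mem_of_mem hxL hyL
      exact hp (this hpline)
    set m : V := ↑(EuclideanGeometry.orthogonalProjection M q) with hm
    have hmM : m ∈ M := EuclideanGeometry.orthogonalProjection_mem q
    -- p ≠ m
    have hpm : p ≠ m := by
      intro h
      have h1 : q - m ∈ M.directionᗮ := by
        simpa [vsub_eq_sub, ← hm] using
          EuclideanGeometry.vsub_orthogonalProjection_mem_direction_orthogonal M q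
      have h2 : p - q ∈ L.directionᗮ := by
        simpa [vsub_eq_sub, ← hq] using
          EuclideanGeometry.vsub_orthogonalProjection_mem_direction_orthogonal L p
      have h3 : y - m ∈ M.direction := by
        simpa [vsub_eq_sub] using AffineSubspace.vsub_mem_direction hyM hmM
      have h4 : y - q ∈ L.direction := by
        simpa [vsub_eq_sub] using AffineSubspace.vsub_mem_direction hyL hqL
      have i1 : (inner ℝ (y - m) (q - m) : ℝ) = 0 :=
        Submodule.inner_right_of_mem_orthogonal h3 h1
      have i2 : (inner ℝ (y - q) (p - q) : ℝ) = 0 :=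
        Submodule.inner_right_of_mem_orthogonal h4 h2
      rw [← h] at i1
      have i2' : (inner ℝ (y - q) (q - p) : ℝ) = 0 := by
        rw [show q - p = -(p - q) by abel, inner_neg_right, i2, neg_zero]
      have i0 : (inner ℝ (q - p) (q - p) : ℝ) = 0 := by
        have hsplit : (inner ℝ (q - p) (q - p) : ℝ)
            = (inner ℝ (y - p) (q - p) : ℝ) - (inner ℝ (y - q) (q - p) : ℝ) := by
          rw [← inner_sub_left]
          congr 1
          abel
        rw [hsplit, i1, i2', sub_zero]
      have : q - p = 0 := by
        have := inner_self_eq_zero (𝕜 := ℝ) (x := q - p)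
        exact this.1 i0
      exact hpq (by rw [← sub_eq_zero]; rw [show p - q = -(q - p) by abel, this, neg_zero])
    -- Pythagoras in M
    have hqm_lt : dist q m < dist p q := by
      have py := dist_sq_eq_dist_orthogonalProjection_sq_add_dist_orthogonalProjection_sq
        (s := M) q hpM
      rw [← hm] at py
      have h1 : 0 < dist p m := dist_pos.2 hpm
      have h2 : (0:ℝ) ≤ dist q m := dist_nonneg
      have h3 : (0:ℝ) ≤ dist p q := dist_nonneg
      nlinarith
    -- x = s • (y - q) + q
    have hyq : y - q = ty • d := by rw [hy]; abel
    have hxq : x = s • (y - q) + q := by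
      rw [hx, hs, hyq, mul_smul]
    -- the point m' on M close to x
    set m' : V := s • (y - m) + m with hm'
    have hm'M : m' ∈ M := by
      have := AffineSubspace.smul_vsub_vadd_mem M s hyM hmM hmM
      simpa [vsub_eq_sub, vadd_eq_add, hm'] using this
    have hdist_xm' : dist x m' = (1 - s) * dist q m := by
      have hsub : x - m' = (1 - s) • (q - m) := by
        rw [hxq, hm']
        module
      rw [dist_eq_norm, hsub, norm_smul, Real.norm_eq_abs,
        abs_of_nonneg (by linarith : (0:ℝ) ≤ 1 - s), ← dist_eq_norm]
    refine ⟨x, y, hxmem, hymem, hpy, hxM, ?_⟩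
    calc infDist x (M : Set V) ≤ dist x m' := infDist_le_dist_of_mem hm'M
      _ = (1 - s) * dist q m := hdist_xm'
      _ ≤ dist q m := by nlinarith [dist_nonneg (x := q) (y := m)]
      _ < dist p q := hqm_lt
      _ ≤ infDist p (L : Set V) := hle
  -- pigeonhole on signs
  have pigeon : (0 ≤ ta ∧ 0 ≤ tb ∨ ta ≤ 0 ∧ tb ≤ 0) ∨
      (0 ≤ ta ∧ 0 ≤ tc ∨ ta ≤ 0 ∧ tc ≤ 0) ∨
      (0 ≤ tb ∧ 0 ≤ tc ∨ tb ≤ 0 ∧ tc ≤ 0) := by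
    rcases le_total 0 ta with h | h <;> rcases le_total 0 tb with h' | h' <;>
      rcases le_total 0 tc with h'' | h'' <;> tauto
  rcases pigeon with h | h | h
  · rcases sg_same_sign (tinj ta tb a b hta htb hab) h with ⟨s, h1, h2, h3⟩ | ⟨s, h1, h2, h3⟩
    · exact core a b (by simp) (by simp) hab ta tb hta htb ⟨s, h1, h2, h3⟩
    · exact core b a (by simp) (by simp) hab.symm tb ta htb hta ⟨s, h1, h2, h3⟩
  · rcases sg_same_sign (tinj ta tc a c hta htc hca.symm) h with ⟨s, h1, h2, h3⟩ | ⟨s, h1, h2, h3⟩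
    · exact core a c (by simp) (by simp) hca.symm ta tc hta htc ⟨s, h1, h2, h3⟩
    · exact core c a (by simp) (by simp) hca tc ta htc hta ⟨s, h1, h2, h3⟩
  · rcases sg_same_sign (tinj tb tc b c htb htc hcb.symm) h with ⟨s, h1, h2, h3⟩ | ⟨s, h1, h2, h3⟩
    · exact core b c (by simp) (by simp) hcb.symm tb tc htb htc ⟨s, h1, h2, h3⟩
    · exact core c b (by simp) (by simp) hcb tc tb htc htb ⟨s, h1, h2, h3⟩

/-- Sylvester–Gallai in a finite-dimensional real inner product space. -/
theorem sg_aux (S : Finset V) :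
    Collinear ℝ (S : Set V) ∨
      ∃ a ∈ S, ∃ b ∈ S, a ≠ b ∧
        ∀ c ∈ S, c ∈ line[ℝ, a, b] → c = a ∨ c = b := by
  classical
  by_contra hcon
  push_neg at hcon
  obtain ⟨hncol, h2⟩ := hcon
  -- every line through two points of S has a third point of S
  set T : Finset (V × V × V) :=
    (S ×ˢ S ×ˢ S).filter (fun t => t.2.1 ≠ t.2.2 ∧ t.1 ∉ line[ℝ, t.2.1, t.2.2]) with hT
  have hTne : T.Nonempty := by
    by_contra hTe
    rw [Finset.not_nonempty_iff_eq_empty] at hTe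
    have hall : ∀ p ∈ S, ∀ a ∈ S, ∀ b ∈ S, a ≠ b → p ∈ line[ℝ, a, b] := by
      intro p hpS a haS b hbS hab
      by_contra hline
      have : (p, a, b) ∈ T := by
        rw [hT, Finset.mem_filter]
        exact ⟨by simp [Finset.mem_product, hpS, haS, hbS], hab, hline⟩
      rw [hTe] at this
      exact absurd this (Finset.notMem_empty _)
    apply hncol
    rcases Finset.eq_empty_or_nonempty S with rfl | ⟨a, haS⟩
    · simpa using collinear_empty ℝ V
    rw [collinear_iff_of_mem (by simpa using haS : a ∈ (S : Set V))]
    by_cases hb : ∃ b ∈ S, b ≠ a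
    · obtain ⟨b, hbS, hba⟩ := hb
      refine ⟨b - a, fun p hpS => ?_⟩
      have hpS' : p ∈ S := by simpa using hpS
      have := hall p hpS' a haS b hbS hba.symm
      obtain ⟨r, hr⟩ := (sg_mem_line_iff a b p).1 this
      exact ⟨r, by rw [vadd_eq_add, hr]; abel⟩
    · push_neg at hb
      refine ⟨0, fun p hpS => ⟨0, ?_⟩⟩
      have : p = a := hb p (by simpa using hpS)
      simp [this]
  obtain ⟨⟨p, a, b⟩, hmemT, hmin⟩ := T.exists_min_image
    (fun t => infDist t.1 (line[ℝ, t.2.1, t.2.2] : Set V)) hTne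
  rw [hT, Finset.mem_filter] at hmemT
  obtain ⟨hmemP, hab, hpline⟩ := hmemT
  simp only [Finset.mem_product] at hmemP
  obtain ⟨hpS, haS, hbS⟩ := hmemP
  obtain ⟨c, hcS, hcline, hcab⟩ := h2 a haS b hbS hab
  obtain ⟨hca, hcb⟩ := hcab
  obtain ⟨u, v, humem, hvmem, hpv, huline, hlt⟩ :=
    sg_kelly_step hab hpline hcline hca hcb
  have hmemS : ∀ z : V, z ∈ ({a, b, c} : Set V) → z ∈ S := by
    intro z hz
    rcases hz with rfl | rfl | rfl
    · exact haS
    · exact hbS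
    · exact hcS
  have hnew : (u, p, v) ∈ T := by
    rw [hT, Finset.mem_filter]
    exact ⟨by simp [Finset.mem_product, hmemS u humem, hpS, hmemS v hvmem], hpv, huline⟩
  have := hmin _ hnew
  simp only at this
  exact absurd hlt (not_lt.2 this)

end kelly

/-- **Sylvester–Gallai.** Given a finite set `S` of points in the real plane, either all points
of `S` are collinear, or there exist two distinct points of `S` such that the line through them
contains no other point of `S`. -/
theorem sylvester_gallai (S : Finset (ℝ × ℝ)) :
    Collinear ℝ (S : Set (ℝ × ℝ)) ∨
      ∃ a ∈ S, ∃ b ∈ S, a ≠ b ∧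
        ∀ c ∈ S, c ∈ line[ℝ, a, b] → c = a ∨ c = b := by
  classical
  set e : (ℝ × ℝ) ≃ₗ[ℝ] EuclideanSpace ℝ (Fin 2) :=
    (LinearEquiv.finTwoArrow ℝ ℝ).symm.trans
      (WithLp.linearEquiv 2 ℝ (Fin 2 → ℝ)).symm with he
  rcases sg_aux (S.image (fun x => e x)) with h | ⟨a', ha', b', hb', hab', h⟩
  · left
    apply sg_collinear_equiv e
    rwa [Finset.coe_image] at h
  · right
    obtain ⟨a, haS, rfl⟩ := Finset.mem_image.1 ha'
    obtain ⟨b, hbS, rfl⟩ := Finset.mem_image.1 hb'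
    refine ⟨a, haS, b, hbS, fun hh => hab' (by rw [hh]), ?_⟩
    intro c hcS hline
    have hc' : e c ∈ line[ℝ, e a, e b] := (sg_line_equiv e a b c).1 hline
    rcases h (e c) (Finset.mem_image_of_mem _ hcS) hc' with h1 | h1
    · exact Or.inl (e.injective h1)
    · exact Or.inr (e.injective h1)
end

section
/- (Dual Sylvester–Gallai) Given a finite set of lines in the real projective plane, not all passing through a common point, there exists a point lying on exactly two of the lines. -/
open scoped LinearAlgebra.Projectivization

namespace DSG

abbrev V := Fin 3 → ℝ

def dot (u v : V) : ℝ := ∑ i, u i * v i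
def n2 (u : V) : ℝ := dot u u
def cross (u v : V) : V :=
  ![u 1 * v 2 - u 2 * v 1, u 2 * v 0 - u 0 * v 2, u 0 * v 1 - u 1 * v 0]
def onL (A B C : V) : Prop := ∃ t : ℝ, C - A = t • (B - A)
noncomputable def perp (P A B : V) : V :=
  (P - A) - (dot (P - A) (B - A) / n2 (B - A)) • (B - A)
noncomputable def g (x : V × V × V) : ℝ := n2 (perp x.1 x.2.1 x.2.2)

lemma dot_comm (u v : V) : dot u v = dot v u := by
  simp [dot, Fin.sum_univ_three]; ring

lemma n2_nonneg (v : V) : 0 ≤ n2 v := by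
  simp only [n2, dot, Fin.sum_univ_three]
  nlinarith [sq_nonneg (v 0), sq_nonneg (v 1), sq_nonneg (v 2)]

lemma n2_eq_zero {v : V} : n2 v = 0 ↔ v = 0 := by
  constructor
  · intro h
    simp only [n2, dot, Fin.sum_univ_three] at h
    have h0 : v 0 = 0 := by nlinarith [sq_nonneg (v 0), sq_nonneg (v 1), sq_nonneg (v 2)]
    have h1 : v 1 = 0 := by nlinarith [sq_nonneg (v 0), sq_nonneg (v 1), sq_nonneg (v 2)]
    have h2 : v 2 = 0 := by nlinarith [sq_nonneg (v 0), sq_nonneg (v 1), sq_nonneg (v 2)]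
    funext i
    fin_cases i
    · exact h0
    · exact h1
    · exact h2
  · intro h; simp [h, n2, dot]

lemma n2_pos {v : V} (h : v ≠ 0) : 0 < n2 v :=
  lt_of_le_of_ne (n2_nonneg v) (Ne.symm (fun h0 => h (n2_eq_zero.mp h0)))

lemma dcomb (x y : ℝ) (d w : V) :
    dot (x • d - w) (y • d - w) = x * y * n2 d - (x + y) * dot d w + n2 w := by
  simp [dot, n2, Fin.sum_univ_three]; ring

lemma n2sub (u v : V) (c : ℝ) : n2 (u - c • v) = n2 u - 2 * c * dot u v + c ^ 2 * n2 v := by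
  simp [dot, n2, Fin.sum_univ_three]; ring

lemma dot_smul_left (u v : V) (c : ℝ) : dot (c • u) v = c * dot u v := by
  simp [dot, Fin.sum_univ_three]; ring

lemma dot_smul_right (u v : V) (c : ℝ) : dot u (c • v) = c * dot u v := by
  simp [dot, Fin.sum_univ_three]; ring

lemma dot_sub_smul (d u v : V) (c : ℝ) : dot d (u - c • v) = dot d u - c * dot d v := by
  simp [dot, Fin.sum_univ_three]; ring

lemma dot_expand (q A B : V) (t : ℝ) :
    dot q (A + t • (B - A)) = dot q A + t * (dot q B - dot q A) := by
  simp [dot, Fin.sum_univ_three]; ring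

lemma master (A B v : V) (i : Fin 3) :
    n2 (cross A B) * v i =
      ((dot A v) * (n2 B) - (dot B v) * (dot A B)) * A i +
      ((dot B v) * (n2 A) - (dot A v) * (dot A B)) * B i +
      (dot (cross A B) v) * (cross A B) i := by
  fin_cases i <;> simp [dot, n2, cross, Fin.sum_univ_three] <;> ring

lemma crossB (A B : V) (i : Fin 3) :
    (cross (cross A B) B) i = (dot A B) * B i - (n2 B) * A i := by
  fin_cases i <;> simp [dot, n2, cross, Fin.sum_univ_three] <;> ring

lemma dot_cross_left (A B : V) : dot (cross A B) A = 0 := by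
  simp [dot, cross, Fin.sum_univ_three]; ring

lemma dot_cross_right (A B : V) : dot (cross A B) B = 0 := by
  simp [dot, cross, Fin.sum_univ_three]; ring

lemma pair_pick (p q : ℝ) (h : p ≠ q) (hpq : 0 ≤ p * q) :
    ∃ x y : ℝ, ((x = p ∧ y = q) ∨ (x = q ∧ y = p)) ∧ x ≠ y ∧ (y - x) ^ 2 ≤ y ^ 2 := by
  rcases le_total (p ^ 2) (q ^ 2) with hle | hle
  · exact ⟨p, q, Or.inl ⟨rfl, rfl⟩, h, by nlinarith⟩
  · exact ⟨q, p, Or.inr ⟨rfl, rfl⟩, h.symm, by nlinarith⟩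

lemma sign_pick (a b c : ℝ) (h1 : a ≠ b) (h2 : a ≠ c) (h3 : b ≠ c) :
    ∃ x y : ℝ, (x = a ∨ x = b ∨ x = c) ∧ (y = a ∨ y = b ∨ y = c) ∧ x ≠ y ∧
      (y - x) ^ 2 ≤ y ^ 2 := by
  have pick : ∀ p q : ℝ, p ≠ q → 0 ≤ p * q → (p = a ∨ p = b ∨ p = c) →
      (q = a ∨ q = b ∨ q = c) →
      ∃ x y : ℝ, (x = a ∨ x = b ∨ x = c) ∧ (y = a ∨ y = b ∨ y = c) ∧ x ≠ y ∧
        (y - x) ^ 2 ≤ y ^ 2 := by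
    intro p q hne hpq hp hq
    obtain ⟨x, y, hxy, hne', hineq⟩ := pair_pick p q hne hpq
    rcases hxy with ⟨hx, hy⟩ | ⟨hx, hy⟩ <;> subst hx <;> subst hy <;>
      exact ⟨_, _, by tauto, by tauto, hne', hineq⟩
  rcases le_total 0 a with ha | ha <;> rcases le_total 0 b with hb | hb <;>
    rcases le_total 0 c with hc | hc
  · exact pick a b h1 (mul_nonneg ha hb) (by tauto) (by tauto)
  · exact pick a b h1 (mul_nonneg ha hb) (by tauto) (by tauto)
  · exact pick a c h2 (mul_nonneg ha hc) (by tauto) (by tauto)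
  · exact pick b c h3 (mul_nonneg_of_nonpos_of_nonpos hb hc) (by tauto) (by tauto)
  · exact pick b c h3 (mul_nonneg hb hc) (by tauto) (by tauto)
  · exact pick a c h2 (mul_nonneg_of_nonpos_of_nonpos ha hc) (by tauto) (by tauto)
  · exact pick a b h1 (mul_nonneg_of_nonpos_of_nonpos ha hb) (by tauto) (by tauto)
  · exact pick a b h1 (mul_nonneg_of_nonpos_of_nonpos ha hb) (by tauto) (by tauto)

/-- Kelly's proof of the Sylvester–Gallai theorem, for points in `ℝ³`. -/
theorem kelly (S : Finset V) (A₀ B₀ C₀ : V) (hA₀ : A₀ ∈ S) (hB₀ : B₀ ∈ S) (hC₀ : C₀ ∈ S)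
    (hne₀ : A₀ ≠ B₀) (hnc₀ : ¬ onL A₀ B₀ C₀) :
    ∃ A ∈ S, ∃ B ∈ S, A ≠ B ∧ ∀ C ∈ S, onL A B C → C = A ∨ C = B := by
  classical
  set T : Finset (V × V × V) :=
    (S ×ˢ S ×ˢ S).filter (fun x => x.2.1 ≠ x.2.2 ∧ ¬ onL x.2.1 x.2.2 x.1) with hT
  have hTne : T.Nonempty := ⟨(C₀, A₀, B₀), by
    simp only [hT, Finset.mem_filter, Finset.mem_product]
    exact ⟨⟨hC₀, hA₀, hB₀⟩, hne₀, hnc₀⟩⟩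
  obtain ⟨⟨P, A, B⟩, hmem, hmin⟩ := T.exists_min_image g hTne
  simp only [hT, Finset.mem_filter, Finset.mem_product] at hmem
  obtain ⟨⟨hPS, hAS, hBS⟩, hAB, hPnot⟩ := hmem
  refine ⟨A, hAS, B, hBS, hAB, ?_⟩
  intro C hCS honL
  by_contra hcon
  push_neg at hcon
  obtain ⟨hCA, hCB⟩ := hcon
  set d : V := B - A with hd
  have hdne : d ≠ 0 := sub_ne_zero.mpr (Ne.symm hAB)
  have hD : 0 < n2 d := n2_pos hdne
  set D : ℝ := n2 d with hDdef
  set s : ℝ := dot (P - A) d / D with hs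
  set w : V := perp P A B with hwdef
  have hw : w = (P - A) - s • d := rfl
  have hwne : w ≠ 0 := by
    intro h0
    exact hPnot ⟨s, by rw [hw] at h0; rwa [sub_eq_zero] at h0⟩
  have hW : 0 < n2 w := n2_pos hwne
  set W : ℝ := n2 w with hWdef
  have hdw : dot d w = 0 := by
    have hDd : D = dot d d := rfl
    have hDd0 : dot d d ≠ 0 := by rw [← hDd]; exact ne_of_gt hD
    rw [hw, dot_sub_smul, hs, dot_comm (P - A) d, hDd]
    field_simp
    ring
  have gPAB : g (P, A, B) = W := rfl
  obtain ⟨t, htC⟩ := honL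
  have ht0 : t ≠ 0 := by
    intro h0; rw [h0, zero_smul, sub_eq_zero] at htC; exact hCA htC
  have ht1 : t ≠ 1 := by
    intro h1; rw [h1, one_smul] at htC
    exact hCB (by have := sub_left_inj.mp htC; exact this)
  obtain ⟨x, y, hx, hy, hxy, hineq⟩ := sign_pick (-s) (1 - s) (t - s)
    (by intro h; linarith) (by intro h; apply ht0; linarith) (by intro h; apply ht1; linarith)
  set pt : ℝ → V := fun r => A + (s + r) • d with hpt
  have hP : P = A + s • d + w := by rw [hw]; module
  have hptA : pt (-s) = A := by simp [hpt]
  have hptB : pt (1 - s) = B := by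
    simp only [hpt]
    have : s + (1 - s) = 1 := by ring
    rw [this, one_smul, hd]; module
  have hptC : pt (t - s) = C := by
    simp only [hpt]
    have : s + (t - s) = t := by ring
    rw [this]
    have : C = A + t • d := by rw [← htC]; module
    rw [← this]
  set X : V := pt x with hX
  set Y : V := pt y with hY
  have hXS : X ∈ S := by
    rcases hx with h | h | h <;> rw [hX, h]
    · rwa [hptA]
    · rwa [hptB]
    · rwa [hptC]
  have hYS : Y ∈ S := by
    rcases hy with h | h | h <;> rw [hY, h]
    · rwa [hptA]
    · rwa [hptB]
    · rwa [hptC]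
  have hXP : X - P = x • d - w := by rw [hX, hpt, hP]; show A + (s + x) • d - _ = _; module
  have hYP : Y - P = y • d - w := by rw [hY, hpt, hP]; show A + (s + y) • d - _ = _; module
  have hnYP : n2 (Y - P) = y ^ 2 * D + W := by
    rw [hYP]; show dot _ _ = _; rw [dcomb, hdw]; ring
  have hnYPpos : 0 < n2 (Y - P) := by rw [hnYP]; nlinarith [sq_nonneg y]
  have hPY : P ≠ Y := by
    intro h0
    rw [← h0, sub_self, n2_eq_zero.mpr rfl] at hnYPpos
    exact lt_irrefl 0 hnYPpos
  have hnXP : n2 (X - P) = x ^ 2 * D + W := by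
    rw [hXP]; show dot _ _ = _; rw [dcomb, hdw]; ring
  have hdXY : dot (X - P) (Y - P) = x * y * D + W := by
    rw [hXP, hYP, dcomb, hdw]; ring
  have gXPY : g (X, P, Y) = D * W * (x - y) ^ 2 / (y ^ 2 * D + W) := by
    show n2 ((X - P) - (dot (X - P) (Y - P) / n2 (Y - P)) • (Y - P)) = _
    rw [n2sub, hdXY, hnYP, hnXP]
    have hden : y ^ 2 * D + W ≠ 0 := by nlinarith [sq_nonneg y]
    field_simp
    ring
  have hgXPYpos : 0 < g (X, P, Y) := by
    rw [gXPY]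
    apply div_pos _ (by nlinarith [sq_nonneg y])
    have hxy' : x - y ≠ 0 := sub_ne_zero.mpr hxy
    have h2 : 0 < (x - y) ^ 2 := lt_of_le_of_ne (sq_nonneg _) (Ne.symm (pow_ne_zero 2 hxy'))
    exact mul_pos (mul_pos hD hW) h2
  have hnotonL' : ¬ onL P Y X := by
    rintro ⟨t', ht'⟩
    have hc : dot (X - P) (Y - P) / n2 (Y - P) = t' := by
      rw [ht', dot_smul_left]
      show t' * n2 (Y - P) / n2 (Y - P) = t'
      field_simp [ne_of_gt hnYPpos]
    have : g (X, P, Y) = 0 := by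
      show n2 ((X - P) - (dot (X - P) (Y - P) / n2 (Y - P)) • (Y - P)) = _
      rw [hc, ht', sub_self, n2_eq_zero.mpr rfl]
    rw [this] at hgXPYpos
    exact lt_irrefl 0 hgXPYpos
  have hmemXPY : (X, P, Y) ∈ T := by
    simp only [hT, Finset.mem_filter, Finset.mem_product]
    exact ⟨⟨hXS, hPS, hYS⟩, hPY, hnotonL'⟩
  have hle := hmin (X, P, Y) hmemXPY
  rw [gPAB, gXPY] at hle
  have hlt : D * W * (x - y) ^ 2 / (y ^ 2 * D + W) < W := by
    rw [div_lt_iff₀ (by nlinarith [sq_nonneg y])]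
    nlinarith [mul_pos hD hW, sq_nonneg y, sq_nonneg (x - y),
      mul_le_mul_of_nonneg_left hineq (le_of_lt (mul_pos hD hW)), mul_pos hW hW]
  linarith

lemma cross_ne_zero (a A B : V) (hA : dot a A = 1) (hB : dot a B = 1) (hAB : A ≠ B) :
    cross A B ≠ 0 := by
  intro hq
  have hBne : B ≠ 0 := by intro h0; rw [h0] at hB; simp [dot] at hB
  have hnB : n2 B ≠ 0 := ne_of_gt (n2_pos hBne)
  have key : ∀ i, (dot A B) * B i - (n2 B) * A i = 0 := by
    intro i; rw [← crossB A B i, hq]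
    fin_cases i <;> simp [cross]
  have key2 := key
  simp only [dot, n2, Fin.sum_univ_three] at key2
  have h1 : (dot A B) * (dot a B) - (n2 B) * (dot a A) = 0 := by
    simp only [dot, n2, Fin.sum_univ_three]
    linear_combination a 0 * key2 0 + a 1 * key2 1 + a 2 * key2 2
  rw [hA, hB] at h1
  have hEq : dot A B = n2 B := by linarith
  apply hAB
  funext i
  have hki := key i
  rw [hEq] at hki
  have h2 : n2 B * (B i - A i) = 0 := by linear_combination hki
  rcases mul_eq_zero.mp h2 with h3 | h3
  · exact absurd h3 hnB
  · linarith [sub_eq_zero.mp h3]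

lemma onL_of_dot_cross (a A B v : V) (hA : dot a A = 1) (hB : dot a B = 1) (hv : dot a v = 1)
    (hAB : A ≠ B) (h0 : dot (cross A B) v = 0) : onL A B v := by
  have hq : cross A B ≠ 0 := cross_ne_zero a A B hA hB hAB
  have hN : n2 (cross A B) ≠ 0 := ne_of_gt (n2_pos hq)
  set N := n2 (cross A B) with hNdef
  set α := (dot A v) * (n2 B) - (dot B v) * (dot A B) with hα
  set β := (dot B v) * (n2 A) - (dot A v) * (dot A B) with hβ
  have hm : ∀ i, N * v i = α * A i + β * B i := by
    intro i
    have := master A B v i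
    rw [h0] at this
    simpa using this
  have hsum : N = α + β := by
    have h' : N * dot a v = α * dot a A + β * dot a B := by
      simp only [dot, Fin.sum_univ_three]
      linear_combination a 0 * hm 0 + a 1 * hm 1 + a 2 * hm 2
    rw [hA, hB, hv] at h'
    linarith
  refine ⟨β / N, ?_⟩
  funext i
  show v i - A i = (β / N) * (B i - A i)
  field_simp
  linear_combination hm i - A i * hsum

lemma exists_ortho (v : V) : ∃ q : V, q ≠ 0 ∧ dot q v = 0 := by
  by_cases h : v 0 = 0 ∧ v 1 = 0
  · refine ⟨![1, 0, 0], ?_, ?_⟩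
    · intro h0; have := congrFun h0 0; norm_num at this
    · simp [dot, Fin.sum_univ_three, h.1]
  · refine ⟨![-(v 1), v 0, 0], ?_, ?_⟩
    · intro h0
      apply h
      refine ⟨?_, ?_⟩
      · have := congrFun h0 1; simpa using this
      · have := congrFun h0 0; simpa using this
    · simp [dot, Fin.sum_univ_three]; ring

lemma exists_chart (L : Finset (Projectivization ℝ V)) : ∃ a : V, ∀ ℓ ∈ L, dot a ℓ.rep ≠ 0 := by
  classical
  have hfin : (⋃ ℓ ∈ L, {t : ℝ | ℓ.rep 0 + ℓ.rep 1 * t + ℓ.rep 2 * t ^ 2 = 0}).Finite := by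
    apply Set.Finite.biUnion L.finite_toSet
    intro ℓ _
    have hrep := ℓ.rep_nonzero
    set p : Polynomial ℝ := Polynomial.C (ℓ.rep 0) + Polynomial.C (ℓ.rep 1) * Polynomial.X +
      Polynomial.C (ℓ.rep 2) * Polynomial.X ^ 2 with hp
    have c0 : p.coeff 0 = ℓ.rep 0 := by simp [hp]
    have c1 : p.coeff 1 = ℓ.rep 1 := by simp [hp]
    have c2 : p.coeff 2 = ℓ.rep 2 := by simp [hp, Polynomial.coeff_X_pow]
    have hpne : p ≠ 0 := by
      intro h0
      apply hrep
      funext i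
      fin_cases i
      · show ℓ.rep 0 = (0 : V) 0; rw [← c0, h0]; simp
      · show ℓ.rep 1 = (0 : V) 1; rw [← c1, h0]; simp
      · show ℓ.rep 2 = (0 : V) 2; rw [← c2, h0]; simp
    have hfin' := Polynomial.finite_setOf_isRoot hpne
    have : {t : ℝ | ℓ.rep 0 + ℓ.rep 1 * t + ℓ.rep 2 * t ^ 2 = 0} =
        {t | Polynomial.IsRoot p t} := by
      ext t
      simp [Polynomial.IsRoot, hp]
    rw [this]
    exact hfin'
  obtain ⟨t, ht⟩ := hfin.infinite_compl.nonempty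
  refine ⟨![1, t, t ^ 2], ?_⟩
  intro ℓ hℓ h0
  apply ht
  simp only [Set.mem_iUnion]
  refine ⟨ℓ, hℓ, ?_⟩
  simp only [dot, Fin.sum_univ_three] at h0
  simp only [Set.mem_setOf_eq]
  norm_num [Matrix.cons_val_zero, Matrix.cons_val_one, Matrix.cons_val_two] at h0 ⊢
  linear_combination h0

lemma rep_mk (q : V) (hq : q ≠ 0) :
    ∃ c : ℝ, c ≠ 0 ∧ (Projectivization.mk ℝ q hq).rep = c • q := by
  have h := Projectivization.mk_rep (Projectivization.mk ℝ q hq)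
  rw [Projectivization.mk_eq_mk_iff] at h
  obtain ⟨u, hu⟩ := h
  exact ⟨(u : ℝ), u.ne_zero, by rw [← hu, Units.smul_def]⟩

end DSG

/-- A point of the real projective plane lies on a line (a point of the dual projective
plane, given by a nonzero linear form up to scalar) if the standard pairing of
representatives vanishes.  This is independent of the chosen representatives. -/
def OnLine (p ℓ : Projectivization ℝ (Fin 3 → ℝ)) : Prop :=
  ∑ i, p.rep i * ℓ.rep i = 0

/-- **Dual Sylvester–Gallai.** Given a finite set of lines in the real projective plane,
not all passing through a common point, there exists a point lying on exactly two
of the lines. -/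
theorem dual_sylvester_gallai (L : Finset (Projectivization ℝ (Fin 3 → ℝ)))
    (h : ¬ ∃ p : Projectivization ℝ (Fin 3 → ℝ), ∀ ℓ ∈ L, OnLine p ℓ) :
    ∃ p : Projectivization ℝ (Fin 3 → ℝ),
      {ℓ ∈ (L : Set (Projectivization ℝ (Fin 3 → ℝ))) | OnLine p ℓ}.ncard = 2 := by
  classical
  obtain ⟨a, ha⟩ := DSG.exists_chart L
  set φ : Projectivization ℝ (Fin 3 → ℝ) → DSG.V :=
    fun ℓ => (DSG.dot a ℓ.rep)⁻¹ • ℓ.rep with hφ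
  have hφdef : ∀ ℓ, φ ℓ = (DSG.dot a ℓ.rep)⁻¹ • ℓ.rep := fun _ => rfl
  set S : Finset DSG.V := L.image φ with hS
  have hchart : ∀ ℓ ∈ L, DSG.dot a (φ ℓ) = 1 := by
    intro ℓ hℓ
    rw [hφdef ℓ, DSG.dot_smul_right]
    field_simp [ha ℓ hℓ]
  have hchartS : ∀ v ∈ S, DSG.dot a v = 1 := by
    intro v hv
    rw [hS, Finset.mem_image] at hv
    obtain ⟨ℓ, hℓ, rfl⟩ := hv
    exact hchart ℓ hℓ
  have hiff : ∀ (q : DSG.V), ∀ ℓ ∈ L, (DSG.dot q (φ ℓ) = 0 ↔ DSG.dot q ℓ.rep = 0) := by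
    intro q ℓ hℓ
    rw [hφdef ℓ, DSG.dot_smul_right]
    constructor
    · intro h0
      rcases mul_eq_zero.mp h0 with h1 | h1
      · exact absurd (inv_eq_zero.mp h1) (ha ℓ hℓ)
      · exact h1
    · intro h0; rw [h0, mul_zero]
  have hinj : ∀ ℓ1 ∈ L, ∀ ℓ2 ∈ L, φ ℓ1 = φ ℓ2 → ℓ1 = ℓ2 := by
    intro ℓ1 h1 ℓ2 h2 heq
    rw [hφdef ℓ1, hφdef ℓ2] at heq
    have e1 := ha ℓ1 h1
    have e2 := ha ℓ2 h2
    have h3 : ℓ1.rep = ((DSG.dot a ℓ1.rep) * (DSG.dot a ℓ2.rep)⁻¹) • ℓ2.rep := by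
      calc ℓ1.rep = (DSG.dot a ℓ1.rep) • ((DSG.dot a ℓ1.rep)⁻¹ • ℓ1.rep) :=
            (smul_inv_smul₀ e1 _).symm
        _ = (DSG.dot a ℓ1.rep) • ((DSG.dot a ℓ2.rep)⁻¹ • ℓ2.rep) := by rw [heq]
        _ = ((DSG.dot a ℓ1.rep) * (DSG.dot a ℓ2.rep)⁻¹) • ℓ2.rep := smul_smul _ _ _
    have hmk : Projectivization.mk ℝ ℓ1.rep ℓ1.rep_nonzero =
        Projectivization.mk ℝ ℓ2.rep ℓ2.rep_nonzero := by
      rw [Projectivization.mk_eq_mk_iff]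
      exact ⟨Units.mk0 _ (mul_ne_zero e1 (inv_ne_zero e2)), by
        rw [Units.smul_def]; exact h3.symm⟩
    simpa [Projectivization.mk_rep] using hmk
  have done : ∀ q : DSG.V, q ≠ 0 → (∀ ℓ ∈ L, DSG.dot q ℓ.rep = 0) → False := by
    intro q hq hall
    obtain ⟨c, hc0, hrep⟩ := DSG.rep_mk q hq
    apply h
    refine ⟨Projectivization.mk ℝ q hq, ?_⟩
    intro ℓ hℓ
    have : DSG.dot ((Projectivization.mk ℝ q hq).rep) ℓ.rep = 0 := by
      rw [hrep, DSG.dot_smul_left, hall ℓ hℓ, mul_zero]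
    exact this
  have htrip : ∃ A ∈ S, ∃ B ∈ S, ∃ C ∈ S, A ≠ B ∧ ¬ DSG.onL A B C := by
    by_contra hno
    push_neg at hno
    by_cases hex : ∃ A ∈ S, ∃ B ∈ S, A ≠ B
    · obtain ⟨A, hAS, B, hBS, hAB⟩ := hex
      have hqne : DSG.cross A B ≠ 0 :=
        DSG.cross_ne_zero a A B (hchartS A hAS) (hchartS B hBS) hAB
      apply done (DSG.cross A B) hqne
      intro ℓ hℓ
      rw [← hiff (DSG.cross A B) ℓ hℓ]
      have hφS : φ ℓ ∈ S := Finset.mem_image_of_mem φ hℓ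
      obtain ⟨t, ht⟩ := hno A hAS B hBS (φ ℓ) hφS hAB
      have heq : φ ℓ = A + t • (B - A) := by rw [← ht]; module
      rw [heq, DSG.dot_expand, DSG.dot_cross_left, DSG.dot_cross_right]
      ring
    · push_neg at hex
      rcases L.eq_empty_or_nonempty with rfl | ⟨ℓ0, hℓ0⟩
      · apply h
        refine ⟨Projectivization.mk ℝ ![1, 0, 0]
          (by intro h0; have := congrFun h0 0; norm_num at this), ?_⟩
        intro ℓ hℓ
        exact absurd hℓ (by simp)
      · obtain ⟨q, hqne, hqv⟩ := DSG.exists_ortho (φ ℓ0)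
        apply done q hqne
        intro ℓ hℓ
        rw [← hiff q ℓ hℓ]
        have : φ ℓ = φ ℓ0 :=
          hex _ (Finset.mem_image_of_mem φ hℓ) _ (Finset.mem_image_of_mem φ hℓ0)
        rw [this]
        exact hqv
  obtain ⟨A, hAS, B, hBS, C, hCS, hAB, hnc⟩ := htrip
  obtain ⟨A', hA'S, B', hB'S, hA'B', hord⟩ := DSG.kelly S A B C hAS hBS hCS hAB hnc
  have hqne : DSG.cross A' B' ≠ 0 :=
    DSG.cross_ne_zero a A' B' (hchartS A' hA'S) (hchartS B' hB'S) hA'B'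
  obtain ⟨c, hc0, hrep⟩ := DSG.rep_mk (DSG.cross A' B') hqne
  set p := Projectivization.mk ℝ (DSG.cross A' B') hqne with hp
  refine ⟨p, ?_⟩
  have hA'mem := hA'S
  rw [hS, Finset.mem_image] at hA'mem
  obtain ⟨ℓ1, hℓ1, hφ1⟩ := hA'mem
  have hB'mem := hB'S
  rw [hS, Finset.mem_image] at hB'mem
  obtain ⟨ℓ2, hℓ2, hφ2⟩ := hB'mem
  have hON : ∀ ℓ, OnLine p ℓ ↔ DSG.dot (DSG.cross A' B') ℓ.rep = 0 := by
    intro ℓ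
    constructor
    · intro h0
      have h0' : DSG.dot p.rep ℓ.rep = 0 := h0
      rw [hp, hrep, DSG.dot_smul_left] at h0'
      exact (mul_eq_zero.mp h0').resolve_left hc0
    · intro h0
      show DSG.dot p.rep ℓ.rep = 0
      rw [hp, hrep, DSG.dot_smul_left, h0, mul_zero]
  have hset : {ℓ ∈ (L : Set (Projectivization ℝ (Fin 3 → ℝ))) | OnLine p ℓ} = {ℓ1, ℓ2} := by
    ext ℓ
    simp only [Set.mem_setOf_eq, Set.mem_insert_iff, Set.mem_singleton_iff, Finset.mem_coe]
    constructor
    · rintro ⟨hℓL, hon⟩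
      have hd : DSG.dot (DSG.cross A' B') (φ ℓ) = 0 :=
        (hiff _ ℓ hℓL).mpr ((hON ℓ).mp hon)
      have honl : DSG.onL A' B' (φ ℓ) :=
        DSG.onL_of_dot_cross a A' B' (φ ℓ) (hchartS A' hA'S) (hchartS B' hB'S)
          (hchart ℓ hℓL) hA'B' hd
      rcases hord (φ ℓ) (Finset.mem_image_of_mem φ hℓL) honl with h1 | h1
      · left; exact hinj ℓ hℓL ℓ1 hℓ1 (by rw [h1, ← hφ1])
      · right; exact hinj ℓ hℓL ℓ2 hℓ2 (by rw [h1, ← hφ2])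
    · rintro (rfl | rfl)
      · exact ⟨hℓ1, (hON ℓ).mpr ((hiff _ ℓ hℓ1).mp
          (by rw [hφ1]; exact DSG.dot_cross_left A' B'))⟩
      · exact ⟨hℓ2, (hON ℓ).mpr ((hiff _ ℓ hℓ2).mp
          (by rw [hφ2]; exact DSG.dot_cross_right A' B'))⟩
  rw [hset]
  exact Set.ncard_pair (fun heq => hA'B' (by rw [← hφ1, ← hφ2, heq]))
end

section
/- (Füredi–Palásti concurrency lemma) Let n be a positive integer, ξ = exp(2πi/n), and P_m = ξ^m on the unit circle. For indices m, k, let L_{m,k} denote the line through P_m and P_k if m ≠ k, and the tangent line to the unit circle at P_m if m = k. Then for the lines L_i := L_{i, n/2 - 2i} (indices mod n, n even), three distinct lines L_i, L_j, L_k are concurrent if and only if n divides i + j + k. -/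
noncomputable section

open Complex

/-- The point `P_m = ξ^m` on the unit circle, where `ξ = exp(2πi/n)`, identifying `ℝ²` with
`ℂ`. -/
def pt (n : ℕ) (m : ℤ) : ℂ := Complex.exp (2 * Real.pi * Complex.I * m / n)

/-- A direction vector of the line `L_{m,k}`: the chord direction if `P_m ≠ P_k`, and the
tangent direction `i·P_m` to the unit circle at `P_m` if `P_m = P_k`. -/
def dirL (n : ℕ) (m k : ℤ) : ℂ :=
  if pt n m = pt n k then Complex.I * pt n m else pt n k - pt n m

/-- The (real) line `L_{m,k}` through `P_m` and `P_k` (the tangent line to the unit circle at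
`P_m` when `P_m = P_k`), as a subset of `ℂ ≅ ℝ²`. -/
def lineL (n : ℕ) (m k : ℤ) : Set ℂ :=
  {z | ∃ t : ℝ, z = pt n m + (t : ℂ) * dirL n m k}

/-- Two direction vectors are parallel iff they are proportional over `ℝ`, i.e.
`u·conj v` is real. -/
def IsParallel (u v : ℂ) : Prop := (u * (starRingEnd ℂ) v).im = 0

/-- Three lines (with given direction vectors) are concurrent in the real projective plane:
they meet in a common (affine) point, or they are pairwise parallel (common point at
infinity). -/
def ConcurrentLines (L₁ L₂ L₃ : Set ℂ) (d₁ d₂ d₃ : ℂ) : Prop :=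
  (∃ z : ℂ, z ∈ L₁ ∧ z ∈ L₂ ∧ z ∈ L₃) ∨ (IsParallel d₁ d₂ ∧ IsParallel d₁ d₃)

/-- The `i`-th line `L_i = L_{i, n/2 - 2i}` of the Füredi–Palásti configuration (`n` even). -/
def FPline (n : ℕ) (i : ℤ) : Set ℂ := lineL n i ((n : ℤ) / 2 - 2 * i)

/-- Direction of the `i`-th Füredi–Palásti line. -/
def FPdir (n : ℕ) (i : ℤ) : ℂ := dirL n i ((n : ℤ) / 2 - 2 * i)

lemma pt_ne_zero (n : ℕ) (m : ℤ) : pt n m ≠ 0 := Complex.exp_ne_zero _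

lemma pt_add (n : ℕ) (a b : ℤ) : pt n (a + b) = pt n a * pt n b := by
  unfold pt; rw [← Complex.exp_add]; congr 1; push_cast; ring

lemma pt_zero (n : ℕ) : pt n 0 = 1 := by unfold pt; simp

lemma conj_pt (n : ℕ) (m : ℤ) : (starRingEnd ℂ) (pt n m) = pt n (-m) := by
  unfold pt
  rw [← Complex.exp_conj]
  congr 1
  simp only [map_div₀, map_mul, Complex.conj_I, Complex.conj_ofReal, map_intCast,
    map_natCast, map_ofNat]
  push_cast
  ring

lemma pt_eq_one_iff (n : ℕ) (hn : 0 < n) (m : ℤ) : pt n m = 1 ↔ (n:ℤ) ∣ m := by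
  have hn' : (n:ℂ) ≠ 0 := Nat.cast_ne_zero.mpr hn.ne'
  have hπ : (Real.pi:ℂ) ≠ 0 := by exact_mod_cast Real.pi_ne_zero
  unfold pt
  rw [Complex.exp_eq_one_iff]
  constructor
  · rintro ⟨t, ht⟩
    refine ⟨t, ?_⟩
    have h2 : (2 * (Real.pi:ℂ) * Complex.I) ≠ 0 := by
      simp [Real.pi_ne_zero, Complex.I_ne_zero]
    have hmul : (2 * (Real.pi:ℂ) * Complex.I) * m = (2 * (Real.pi:ℂ) * Complex.I) * ((n:ℂ) * t) := by
      field_simp at ht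
      linear_combination (2 * (Real.pi:ℂ) * Complex.I) * ht
    have : (m:ℂ) = (n:ℂ) * t := mul_left_cancel₀ h2 hmul
    exact_mod_cast this
  · rintro ⟨t, rfl⟩
    exact ⟨t, by field_simp; norm_cast⟩

lemma pt_half (n : ℕ) (hn : 0 < n) (hne : Even n) : pt n ((n:ℤ)/2) = -1 := by
  obtain ⟨t, ht⟩ := hne
  have ht' : (n:ℤ) = 2 * t := by omega
  have htpos : 0 < t := by omega
  have ht0 : (t:ℂ) ≠ 0 := by
    have : (t:ℤ) ≠ 0 := by omega
    exact_mod_cast this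
  rw [ht', Int.mul_ediv_cancel_left _ (by norm_num)]
  unfold pt
  rw [← Complex.exp_pi_mul_I]
  congr 1
  have : ((n:ℤ):ℂ) = 2 * t := by exact_mod_cast ht'
  push_cast at this ⊢
  rw [this]
  field_simp

lemma pt_neg (n : ℕ) (m : ℤ) : pt n (-m) = (pt n m)⁻¹ := by
  have h : pt n m * pt n (-m) = 1 := by
    rw [← pt_add]; simp [pt_zero]
  exact (inv_eq_of_mul_eq_one_right h).symm

lemma conj_pt' (n : ℕ) (m : ℤ) : (starRingEnd ℂ) (pt n m) = (pt n m)⁻¹ := by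
  rw [conj_pt, pt_neg]

lemma pt_congr (n : ℕ) (hn : 0 < n) {a b : ℤ} (h : (n:ℤ) ∣ a - b) : pt n a = pt n b := by
  have h1 : pt n (a - b) = 1 := (pt_eq_one_iff n hn _).mpr h
  have h2 : pt n a = pt n (a - b) * pt n b := by rw [← pt_add]; ring_nf
  rw [h2, h1, one_mul]

lemma pt_inj (n : ℕ) (hn : 0 < n) {a b : ℤ} : pt n a = pt n b ↔ (n:ℤ) ∣ a - b := by
  constructor
  · intro h
    have h1 : pt n (a - b) = 1 := by
      have : pt n (a - b) * pt n b = pt n b := by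
        rw [← pt_add]; ring_nf; rw [h]
      field_simp [pt_ne_zero] at this
      exact this
    exact (pt_eq_one_iff n hn _).mp h1
  · exact pt_congr n hn

lemma mem_lineL_iff (n : ℕ) (m k : ℤ) (z : ℂ) :
    z ∈ lineL n m k ↔ z + (pt n m * pt n k) * (starRingEnd ℂ) z = pt n m + pt n k := by
  set a := pt n m with ha
  set b := pt n k with hb
  have ha0 : a ≠ 0 := pt_ne_zero n m
  have hb0 : b ≠ 0 := pt_ne_zero n k
  have hca : (starRingEnd ℂ) a = a⁻¹ := conj_pt' n m
  have hcb : (starRingEnd ℂ) b = b⁻¹ := conj_pt' n k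
  unfold lineL dirL
  rw [← ha, ← hb]
  by_cases hab : a = b
  · simp only [hab, if_pos rfl, Set.mem_setOf_eq, ↓reduceIte]
    constructor
    · rintro ⟨t, rfl⟩
      simp only [map_add, map_mul, Complex.conj_I, Complex.conj_ofReal, hcb]
      field_simp [hcb]
      ring
    · intro h
      have hz : (starRingEnd ℂ) z = (b + b - z) / (b * b) := by
        field_simp
        linear_combination h
      set w : ℂ := (z - b) / (Complex.I * b) with hw
      have hwr : (starRingEnd ℂ) w = w := by
        rw [hw, map_div₀, map_sub, map_mul, Complex.conj_I, hcb, hz]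
        field_simp
        ring
      have hwre : ((w.re : ℝ) : ℂ) = w := Complex.conj_eq_iff_re.mp hwr
      refine ⟨w.re, ?_⟩
      rw [hwre, hw]
      field_simp
      ring
  · simp only [if_neg (fun h => hab h), Set.mem_setOf_eq]
    constructor
    · rintro ⟨t, rfl⟩
      simp only [map_add, map_mul, map_sub, Complex.conj_ofReal, hca, hcb]
      field_simp [hca, hcb]
      ring
    · intro h
      have hz : (starRingEnd ℂ) z = (a + b - z) / (a * b) := by
        field_simp
        linear_combination h
      have hba : b - a ≠ 0 := sub_ne_zero.mpr (Ne.symm hab)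
      set w : ℂ := (z - a) / (b - a) with hw
      have hinv : b⁻¹ - a⁻¹ ≠ 0 := by
        rw [sub_ne_zero]
        intro h'
        exact hab (inv_injective h').symm
      have hwr : (starRingEnd ℂ) w = w := by
        rw [hw, map_div₀, map_sub, map_sub, hca, hcb, hz]
        rw [div_eq_div_iff (by exact hinv) hba]
        field_simp
        ring
      have hwre : ((w.re : ℝ) : ℂ) = w := Complex.conj_eq_iff_re.mp hwr
      refine ⟨w.re, ?_⟩
      rw [hwre, hw]
      field_simp
      ring

lemma pt_snd (n : ℕ) (hn : 0 < n) (hne : Even n) (m : ℤ) :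
    pt n ((n:ℤ)/2 - 2*m) = -((pt n m)⁻¹ * (pt n m)⁻¹) := by
  have : (n:ℤ)/2 - 2*m = (n:ℤ)/2 + (-m + -m) := by ring
  rw [this, pt_add, pt_add, pt_half n hn hne, pt_neg]
  ring

lemma mem_FPline_iff (n : ℕ) (hn : 0 < n) (hne : Even n) (m : ℤ) (z : ℂ) :
    z ∈ FPline n m ↔
      z + (-(pt n m)⁻¹) * (starRingEnd ℂ) z = pt n m - (pt n m)⁻¹ * (pt n m)⁻¹ := by
  have h0 : pt n m ≠ 0 := pt_ne_zero n m
  rw [FPline, mem_lineL_iff, pt_snd n hn hne]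
  have h1 : pt n m * -((pt n m)⁻¹ * (pt n m)⁻¹) = -(pt n m)⁻¹ := by
    field_simp
  rw [h1]
  constructor <;> intro h <;> linear_combination h

lemma dirL_ne_zero (n : ℕ) (m k : ℤ) : dirL n m k ≠ 0 := by
  unfold dirL
  split_ifs with h
  · exact mul_ne_zero Complex.I_ne_zero (pt_ne_zero n m)
  · exact sub_ne_zero.mpr (fun h' => h h'.symm)

lemma dirL_conj (n : ℕ) (m k : ℤ) :
    dirL n m k = -(pt n m * pt n k) * (starRingEnd ℂ) (dirL n m k) := by
  have ha : pt n m * (pt n m)⁻¹ = 1 := mul_inv_cancel₀ (pt_ne_zero n m)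
  have hb : pt n k * (pt n k)⁻¹ = 1 := mul_inv_cancel₀ (pt_ne_zero n k)
  unfold dirL
  split_ifs with h
  · simp only [map_mul, Complex.conj_I, conj_pt']
    rw [h]
    field_simp [pt_ne_zero]
  · simp only [map_sub, conj_pt']
    field_simp [pt_ne_zero]
    ring

lemma FPdir_conj (n : ℕ) (hn : 0 < n) (hne : Even n) (m : ℤ) :
    FPdir n m = (pt n m)⁻¹ * (starRingEnd ℂ) (FPdir n m) := by
  have := dirL_conj n m ((n:ℤ)/2 - 2*m)
  rw [pt_snd n hn hne] at this
  have h0 : pt n m ≠ 0 := pt_ne_zero n m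
  have h1 : -(pt n m * -((pt n m)⁻¹ * (pt n m)⁻¹)) = (pt n m)⁻¹ := by
    field_simp
  rw [h1] at this
  rw [FPdir]
  exact this

lemma FPline_congr (n : ℕ) (hn : 0 < n) {a b : ℤ} (h : (n:ℤ) ∣ a - b) :
    FPline n a = FPline n b := by
  have h1 : pt n a = pt n b := pt_congr n hn h
  have h2 : pt n ((n:ℤ)/2 - 2*a) = pt n ((n:ℤ)/2 - 2*b) := by
    refine pt_congr n hn ?_
    have : (n:ℤ)/2 - 2*a - ((n:ℤ)/2 - 2*b) = -2 * (a - b) := by ring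
    rw [this]
    exact Dvd.dvd.mul_left h _
  unfold FPline lineL dirL
  simp only [h1, h2]

lemma parallel_eq (n : ℕ) (hn : 0 < n) (hne : Even n) {a b : ℤ}
    (h : IsParallel (FPdir n a) (FPdir n b)) : (n:ℤ) ∣ a - b := by
  have hu := FPdir_conj n hn hne a
  have hv := FPdir_conj n hn hne b
  have hu0 : (starRingEnd ℂ) (FPdir n a) ≠ 0 := by
    simp [FPdir, dirL_ne_zero]
  have hv0 : (starRingEnd ℂ) (FPdir n b) ≠ 0 := by
    simp [FPdir, dirL_ne_zero]
  have heq : (starRingEnd ℂ) (FPdir n a) * FPdir n b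
      = FPdir n a * (starRingEnd ℂ) (FPdir n b) := by
    have h' : (starRingEnd ℂ) (FPdir n a * (starRingEnd ℂ) (FPdir n b))
        = FPdir n a * (starRingEnd ℂ) (FPdir n b) := by
      rw [Complex.conj_eq_iff_im]
      exact h
    rw [map_mul, Complex.conj_conj] at h'
    exact h'
  set cu := (starRingEnd ℂ) (FPdir n a) with hcu
  set cv := (starRingEnd ℂ) (FPdir n b) with hcv
  rw [hu, hv] at heq
  have hz : ((pt n b)⁻¹ - (pt n a)⁻¹) * (cu * cv) = 0 := by
    linear_combination heq
  rcases mul_eq_zero.mp hz with h' | h'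
  · have hab : pt n a = pt n b := inv_injective (sub_eq_zero.mp h').symm
    exact (pt_inj n hn).mp hab
  · exact absurd h' (mul_ne_zero hu0 hv0)

lemma key_identity (X Y Z x y z : ℂ) (hx : X*x = 1) (hy : Y*y = 1) (hz : Z*z = 1) :
    (X*Y*Z - 1) * ((X-Y)*(Y-Z)*(Z-X)) =
    (X^2*Y^2*Z^2) * (((-y) - (-x)) * ((Z - z*z) - (X - x*x))
      - ((-z) - (-x)) * ((Y - y*y) - (X - x*x))) := by
  linear_combination
    (-(Y^2*Z^2*z) + Y^2*Z^2*y + X*Y^2*Z^2*z^2 - X*Y^2*Z^2*y^2 - X*Y^2*Z^2*x*z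
      + X*Y^2*Z^2*x*y - X*Y^2*Z^3 + X*Y^3*Z^2) * hx +
    (Y*Z^2 - X*Z^2 - X*Y*Z^2*y + X^2*Z^2*z - X^2*Y*Z^2*z^2 + X^2*Y*Z^2*y*z
      + X^2*Y*Z^3 - X^3*Y*Z^2) * hy +
    (-(Y^2*Z) + X*Y^2 + X*Y^2*Z*z + X^2*Z - X^2*Y - X^2*Y*Z*z - X^2*Y^3*Z
      + X^3*Y^2*Z) * hz

/-- **Füredi–Palásti concurrency lemma.** For even `n > 0`, three distinct lines
`L_i, L_j, L_k` of the configuration `{L_{i, n/2-2i}}` are concurrent (in the real projective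
plane) if and only if `n` divides `i + j + k`. -/
theorem furedi_palasti_concurrency (n : ℕ) (hn : 0 < n) (hne : Even n) (i j k : ℤ)
    (hij : FPline n i ≠ FPline n j) (hjk : FPline n j ≠ FPline n k)
    (hik : FPline n i ≠ FPline n k) :
    ConcurrentLines (FPline n i) (FPline n j) (FPline n k)
        (FPdir n i) (FPdir n j) (FPdir n k) ↔
      (n : ℤ) ∣ i + j + k := by
  have hij' : ¬ (n:ℤ) ∣ i - j := fun hd => hij (FPline_congr n hn hd)
  have hjk' : ¬ (n:ℤ) ∣ j - k := fun hd => hjk (FPline_congr n hn hd)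
  have hik' : ¬ (n:ℤ) ∣ i - k := fun hd => hik (FPline_congr n hn hd)
  set X := pt n i with hX
  set Y := pt n j with hY
  set Z := pt n k with hZ
  have hX0 : X ≠ 0 := pt_ne_zero n i
  have hY0 : Y ≠ 0 := pt_ne_zero n j
  have hZ0 : Z ≠ 0 := pt_ne_zero n k
  have hXY : X ≠ Y := fun h => hij' ((pt_inj n hn).mp h)
  have hYZ : Y ≠ Z := fun h => hjk' ((pt_inj n hn).mp h)
  have hXZ : X ≠ Z := fun h => hik' ((pt_inj n hn).mp h)
  have hptsum : pt n (i + j + k) = X * Y * Z := by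
    rw [pt_add n (i+j) k, pt_add n i j, ← hX, ← hY, ← hZ]
  constructor
  · rintro (⟨z, hzi, hzj, hzk⟩ | ⟨hp1, _⟩)
    · rw [mem_FPline_iff n hn hne i z] at hzi
      rw [mem_FPline_iff n hn hne j z] at hzj
      rw [mem_FPline_iff n hn hne k z] at hzk
      rw [← hX] at hzi
      rw [← hY] at hzj
      rw [← hZ] at hzk
      have det0 : ((-Y⁻¹) - (-X⁻¹)) * ((Z - Z⁻¹*Z⁻¹) - (X - X⁻¹*X⁻¹))
          - ((-Z⁻¹) - (-X⁻¹)) * ((Y - Y⁻¹*Y⁻¹) - (X - X⁻¹*X⁻¹)) = 0 := by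
        linear_combination ((-Z⁻¹) - (-X⁻¹)) * (hzj - hzi) - ((-Y⁻¹) - (-X⁻¹)) * (hzk - hzi)
      have hprod : (X*Y*Z - 1) * ((X-Y)*(Y-Z)*(Z-X)) = 0 := by
        rw [key_identity X Y Z X⁻¹ Y⁻¹ Z⁻¹ (mul_inv_cancel₀ hX0) (mul_inv_cancel₀ hY0) (mul_inv_cancel₀ hZ0), det0, mul_zero]
      have hfac : (X-Y)*(Y-Z)*(Z-X) ≠ 0 :=
        mul_ne_zero (mul_ne_zero (sub_ne_zero.mpr hXY) (sub_ne_zero.mpr hYZ))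
          (sub_ne_zero.mpr (fun h => hXZ h.symm))
      have h1 : X*Y*Z = 1 := sub_eq_zero.mp ((mul_eq_zero.mp hprod).resolve_right hfac)
      exact (pt_eq_one_iff n hn _).mp (by rw [hptsum, h1])
    · exact absurd (FPline_congr n hn (parallel_eq n hn hne hp1)) hij
  · intro hd
    have hXYZ : X * Y * Z = 1 := by
      rw [← hptsum]
      exact (pt_eq_one_iff n hn _).mpr hd
    left
    have hcX : (starRingEnd ℂ) X = X⁻¹ := conj_pt' n i
    have hcY : (starRingEnd ℂ) Y = Y⁻¹ := conj_pt' n j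
    have hYX : Y - X ≠ 0 := sub_ne_zero.mpr (fun h => hXY h.symm)
    have hWij : (-X⁻¹) - (-Y⁻¹) ≠ 0 := by
      intro h
      exact hXY (inv_injective (neg_injective (sub_eq_zero.mp h)))
    set c : ℂ := ((X - X⁻¹*X⁻¹) - (Y - Y⁻¹*Y⁻¹)) / ((-X⁻¹) - (-Y⁻¹)) with hc
    set z : ℂ := (X - X⁻¹*X⁻¹) - (-X⁻¹) * c with hz
    have hWij' : Y⁻¹ - X⁻¹ ≠ 0 := by
      intro h
      exact hXY (inv_injective (sub_eq_zero.mp h)).symm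
    have hcc : c * ((-X⁻¹) - (-Y⁻¹)) = (X - X⁻¹*X⁻¹) - (Y - Y⁻¹*Y⁻¹) := by
      rw [hc]; exact div_mul_cancel₀ _ hWij
    have hiX : X * X⁻¹ = 1 := mul_inv_cancel₀ hX0
    have hiY : Y * Y⁻¹ = 1 := mul_inv_cancel₀ hY0
    have hcz : (starRingEnd ℂ) z = c := by
      have hccz : (starRingEnd ℂ) c * (Y - X) = X⁻¹ - X*X - (Y⁻¹ - Y*Y) := by
        have h' := congrArg (starRingEnd ℂ) hcc
        simp only [map_mul, map_sub, map_neg, map_inv₀, hcX, hcY, inv_inv,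
          neg_sub_neg] at h'
        exact h'
      have hcz1 : (starRingEnd ℂ) z * (Y - X)
          = (X⁻¹ - X*X)*(Y - X) + X*(X⁻¹ - X*X - (Y⁻¹ - Y*Y)) := by
        rw [hz]
        simp only [map_sub, map_mul, map_neg, map_inv₀, hcX, inv_inv]
        linear_combination X * hccz
      have hcc' : c * (Y⁻¹ - X⁻¹) = (X - X⁻¹*X⁻¹) - (Y - Y⁻¹*Y⁻¹) := by
        linear_combination hcc
      apply mul_right_cancel₀ (mul_ne_zero hYX hWij')
      linear_combination (Y⁻¹ - X⁻¹) * hcz1 - (Y - X) * hcc'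
        + (Y⁻¹ - X⁻¹ - Y^2 + X*Y) * hiX + (-Y⁻¹ + X⁻¹ + X*Y - X^2) * hiY
    have det0' : ((-Y⁻¹) - (-X⁻¹)) * ((Z - Z⁻¹*Z⁻¹) - (X - X⁻¹*X⁻¹))
        - ((-Z⁻¹) - (-X⁻¹)) * ((Y - Y⁻¹*Y⁻¹) - (X - X⁻¹*X⁻¹)) = 0 := by
      have hk := key_identity X Y Z X⁻¹ Y⁻¹ Z⁻¹ (mul_inv_cancel₀ hX0) (mul_inv_cancel₀ hY0) (mul_inv_cancel₀ hZ0)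
      have h2 : (X^2*Y^2*Z^2) ≠ 0 := by
        exact mul_ne_zero (mul_ne_zero (pow_ne_zero _ hX0) (pow_ne_zero _ hY0)) (pow_ne_zero _ hZ0)
      have hk2 : (X^2*Y^2*Z^2) * (((-Y⁻¹) - (-X⁻¹)) * ((Z - Z⁻¹*Z⁻¹) - (X - X⁻¹*X⁻¹))
          - ((-Z⁻¹) - (-X⁻¹)) * ((Y - Y⁻¹*Y⁻¹) - (X - X⁻¹*X⁻¹))) = 0 := by
        rw [← hk, hXYZ]; ring
      exact (mul_eq_zero.mp hk2).resolve_left h2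
    refine ⟨z, ?_, ?_, ?_⟩ <;>
      rw [mem_FPline_iff n hn hne] <;> rw [hcz]
    · rw [← hX, hz]; ring
    · rw [← hY]
      have g2m : (z + (-Y⁻¹) * c - (Y - Y⁻¹*Y⁻¹)) = 0 := by
        rw [hz]; linear_combination -hcc
      linear_combination g2m
    · rw [← hZ]
      have g3m : (z + (-Z⁻¹) * c - (Z - Z⁻¹*Z⁻¹)) * ((-X⁻¹) - (-Y⁻¹)) = 0 := by
        rw [hz]
        linear_combination det0' + (((-Z⁻¹) - (-X⁻¹))) * hcc
      have := (mul_eq_zero.mp g3m).resolve_right hWij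
      linear_combination this

end
end

section
/- In the Füredi–Palásti configuration of 12 lines (n = 12), there are exactly 19 triple points; three of the configuration lines (the tangents at P_2, P_6, P_10) each contain exactly 4 of the triple points, and each of the remaining 9 lines contains exactly 5 of the triple points. -/
noncomputable section

namespace FP12

open Complex

abbrev Z4 : Type := ℤ × ℤ × ℤ × ℤ

def emZ (v : Z4) : ℂ :=
  ((v.1 + v.2.1 * Real.sqrt 3 : ℝ) : ℂ) + ((v.2.2.1 + v.2.2.2 * Real.sqrt 3 : ℝ) : ℂ) * Complex.I

def emH (v : Z4) : ℂ := emZ v / 2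

def qmul (x y : Z4) : Z4 :=
  (x.1*y.1 + 3*x.2.1*y.2.1 - x.2.2.1*y.2.2.1 - 3*x.2.2.2*y.2.2.2,
   x.1*y.2.1 + x.2.1*y.1 - x.2.2.1*y.2.2.2 - x.2.2.2*y.2.2.1,
   x.1*y.2.2.1 + x.2.2.1*y.1 + 3*(x.2.1*y.2.2.2 + x.2.2.2*y.2.1),
   x.1*y.2.2.2 + x.2.2.2*y.1 + x.2.1*y.2.2.1 + x.2.2.1*y.2.1)

def qsub (x y : Z4) : Z4 := (x.1-y.1, x.2.1-y.2.1, x.2.2.1-y.2.2.1, x.2.2.2-y.2.2.2)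

def qconj (x : Z4) : Z4 := (x.1, x.2.1, -x.2.2.1, -x.2.2.2)

def qdouble (x : Z4) : Z4 := (2*x.1, 2*x.2.1, 2*x.2.2.1, 2*x.2.2.2)

lemma emZ_re (v : Z4) : (emZ v).re = v.1 + v.2.1 * Real.sqrt 3 := by simp [emZ]
lemma emZ_im (v : Z4) : (emZ v).im = v.2.2.1 + v.2.2.2 * Real.sqrt 3 := by simp [emZ]

lemma h3 : Real.sqrt 3 ^ 2 = 3 := Real.sq_sqrt (by norm_num)

lemma emZ_mul (x y : Z4) : emZ (qmul x y) = emZ x * emZ y := by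
  apply Complex.ext
  · simp only [emZ_re, emZ_im, Complex.mul_re, qmul]
    push_cast
    linear_combination ((x.2.2.2:ℝ) * (y.2.2.2:ℝ) - (x.2.1:ℝ) * (y.2.1:ℝ)) * h3
  · simp only [emZ_re, emZ_im, Complex.mul_im, qmul]
    push_cast
    linear_combination (-(x.2.1:ℝ) * (y.2.2.2:ℝ) - (x.2.2.2:ℝ) * (y.2.1:ℝ)) * h3

lemma emZ_sub (x y : Z4) : emZ (qsub x y) = emZ x - emZ y := by
  simp only [emZ, qsub]; push_cast; ring

lemma emZ_conj (v : Z4) : (starRingEnd ℂ) (emZ v) = emZ (qconj v) := by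
  simp only [emZ, qconj, map_add, map_mul, Complex.conj_ofReal, Complex.conj_I]
  push_cast; ring

lemma emZ_double (x : Z4) : emZ (qdouble x) = 2 * emZ x := by
  simp only [emZ, qdouble]; push_cast; ring

lemma int3 {a b : ℤ} (h : (a:ℝ) + b * Real.sqrt 3 = 0) : a = 0 ∧ b = 0 := by
  rcases eq_or_ne b 0 with hb | hb
  · subst hb; norm_num at h; exact ⟨by exact_mod_cast h, rfl⟩
  · exfalso
    have hirr : Irrational (Real.sqrt 3) := by
      have := ((by norm_num : Nat.Prime 3)).irrational_sqrt
      simpa using this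
    apply hirr
    refine ⟨-(a:ℚ)/(b:ℚ), ?_⟩
    have hb' : (b:ℝ) ≠ 0 := by exact_mod_cast hb
    push_cast
    field_simp
    linarith

lemma emZ_inj : Function.Injective emZ := by
  rintro ⟨a,b,c,d⟩ ⟨a',b',c',d'⟩ h
  have hre := congrArg Complex.re h
  have him := congrArg Complex.im h
  simp only [emZ_re, emZ_im] at hre him
  have h1 : ((a - a' : ℤ) : ℝ) + (b - b' : ℤ) * Real.sqrt 3 = 0 := by push_cast; linarith
  have h2 : ((c - c' : ℤ) : ℝ) + (d - d' : ℤ) * Real.sqrt 3 = 0 := by push_cast; linarith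
  obtain ⟨e1, e2⟩ := int3 h1
  obtain ⟨e3, e4⟩ := int3 h2
  rw [sub_eq_zero] at e1 e2 e3 e4
  simp only [Prod.mk.injEq]
  exact ⟨e1, e2, e3, e4⟩

lemma emZ_zero : emZ (0,0,0,0) = 0 := by simp [emZ]

lemma emH_inj : Function.Injective emH := by
  intro x y h
  apply emZ_inj
  have : emZ x / 2 = emZ y / 2 := h
  field_simp at this
  exact this

lemma emH_ne_zero {v : Z4} (h : v ≠ (0,0,0,0)) : emH v ≠ 0 := by
  intro hc
  exact h (emZ_inj (by rw [emZ_zero]; rw [emH, div_eq_zero_iff] at hc; exact hc.resolve_right (by norm_num)))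

lemma emH_sub (x y : Z4) : emH (qsub x y) = emH x - emH y := by
  simp only [emH, emZ_sub]; ring

lemma emH_conj (v : Z4) : (starRingEnd ℂ) (emH v) = emH (qconj v) := by
  simp only [emH, map_div₀, emZ_conj, map_ofNat]

lemma emH_mul4 (x y : Z4) : emH x * emH y = emZ (qmul x y) / 4 := by
  simp only [emH, emZ_mul]; ring

lemma emH_mul_emH {a b c : Z4} (h : qmul a b = qdouble c) : emH a * emH b = emH c := by
  rw [emH_mul4, h, emZ_double, emH]; ring

lemma emZ_mul_emH (a b : Z4) : emZ a * emH b = emH (qmul a b) := by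
  simp only [emH, emZ_mul]; ring

lemma mem_line_iff {d : ℂ} (hd : d ≠ 0) (p z : ℂ) :
    (∃ t : ℝ, z = p + (t:ℂ) * d) ↔
      (starRingEnd ℂ) d * (z - p) = d * ((starRingEnd ℂ) z - (starRingEnd ℂ) p) := by
  constructor
  · rintro ⟨t, rfl⟩
    simp only [add_sub_cancel_left, map_add, map_mul, Complex.conj_ofReal]
    ring
  · intro h
    refine ⟨((z - p) / d).re, ?_⟩
    have hw : (starRingEnd ℂ) ((z - p) / d) = (z - p) / d := by
      rw [map_div₀, map_sub]
      rw [div_eq_div_iff (by simpa using hd) hd]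
      linear_combination -h
    have := Complex.conj_eq_iff_re.mp hw
    rw [this, div_mul_cancel₀ _ hd]
    ring_nf

lemma eq_of_two {d1 p1 d2 p2 z q : ℂ}
    (h1 : (starRingEnd ℂ) d1 * (z - p1) = d1 * ((starRingEnd ℂ) z - (starRingEnd ℂ) p1))
    (h2 : (starRingEnd ℂ) d2 * (z - p2) = d2 * ((starRingEnd ℂ) z - (starRingEnd ℂ) p2))
    (k1 : (starRingEnd ℂ) d1 * (q - p1) = d1 * ((starRingEnd ℂ) q - (starRingEnd ℂ) p1))
    (k2 : (starRingEnd ℂ) d2 * (q - p2) = d2 * ((starRingEnd ℂ) q - (starRingEnd ℂ) p2))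
    (hD : (starRingEnd ℂ) d1 * d2 - d1 * (starRingEnd ℂ) d2 ≠ 0) : z = q := by
  have e1 : (starRingEnd ℂ) d1 * (z - q) = d1 * ((starRingEnd ℂ) z - (starRingEnd ℂ) q) := by
    linear_combination h1 - k1
  have e2 : (starRingEnd ℂ) d2 * (z - q) = d2 * ((starRingEnd ℂ) z - (starRingEnd ℂ) q) := by
    linear_combination h2 - k2
  have e3 : ((starRingEnd ℂ) d1 * d2 - d1 * (starRingEnd ℂ) d2) * (z - q) = 0 := by
    linear_combination d2 * e1 - d1 * e2
  rcases mul_eq_zero.mp e3 with h | h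
  · exact absurd h hD
  · exact sub_eq_zero.mp h

lemma pt_one : pt 12 1 = emH (0, 1, 1, 0) := by
  rw [pt]
  rw [show (2 * (Real.pi:ℂ) * Complex.I * ((1:ℤ):ℂ) / ((12:ℕ):ℂ)) = (↑(Real.pi / 6) : ℂ) * Complex.I by
    push_cast; ring]
  rw [Complex.exp_mul_I, ← Complex.ofReal_cos, ← Complex.ofReal_sin,
    Real.cos_pi_div_six, Real.sin_pi_div_six]
  simp only [emH, emZ]
  push_cast
  ring

lemma pt_add_one (m : ℤ) : pt 12 (m + 1) = pt 12 m * pt 12 1 := by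
  rw [pt, pt, pt, ← Complex.exp_add]
  congr 1
  push_cast
  ring

lemma pt_add_twelve (m : ℤ) : pt 12 (m + 12) = pt 12 m := by
  rw [pt, pt, show (2 * (Real.pi:ℂ) * Complex.I * ((m + 12 : ℤ):ℂ) / ((12:ℕ):ℂ))
      = 2 * (Real.pi:ℂ) * Complex.I * (m:ℂ) / ((12:ℕ):ℂ) + 2 * Real.pi * Complex.I by push_cast; ring,
    Complex.exp_add, Complex.exp_two_pi_mul_I, mul_one]

lemma pt_sub_twelve (m : ℤ) : pt 12 (m - 12) = pt 12 m := by
  rw [← pt_add_twelve (m - 12)]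
  norm_num

lemma pt_zero : pt 12 0 = emH (2, 0, 0, 0) := by
  rw [pt, show (2 * (Real.pi:ℂ) * Complex.I * ((0:ℤ):ℂ) / ((12:ℕ):ℂ)) = 0 by push_cast; ring,
    Complex.exp_zero]
  simp only [emH, emZ]
  push_cast
  norm_num

lemma ptv2 : pt 12 2 = emH (1, 0, 0, 1) := by
  rw [show (2:ℤ) = 1 + 1 by norm_num, pt_add_one, pt_one]
  exact emH_mul_emH (by norm_num [qmul, qdouble, Prod.ext_iff])

lemma ptv3 : pt 12 3 = emH (0, 0, 2, 0) := by
  rw [show (3:ℤ) = 2 + 1 by norm_num, pt_add_one, ptv2, pt_one]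
  exact emH_mul_emH (by norm_num [qmul, qdouble, Prod.ext_iff])

lemma ptv4 : pt 12 4 = emH (-1, 0, 0, 1) := by
  rw [show (4:ℤ) = 3 + 1 by norm_num, pt_add_one, ptv3, pt_one]
  exact emH_mul_emH (by norm_num [qmul, qdouble, Prod.ext_iff])

lemma ptv5 : pt 12 5 = emH (0, -1, 1, 0) := by
  rw [show (5:ℤ) = 4 + 1 by norm_num, pt_add_one, ptv4, pt_one]
  exact emH_mul_emH (by norm_num [qmul, qdouble, Prod.ext_iff])

lemma ptv6 : pt 12 6 = emH (-2, 0, 0, 0) := by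
  rw [show (6:ℤ) = 5 + 1 by norm_num, pt_add_one, ptv5, pt_one]
  exact emH_mul_emH (by norm_num [qmul, qdouble, Prod.ext_iff])

lemma ptv7 : pt 12 7 = emH (0, -1, -1, 0) := by
  rw [show (7:ℤ) = 6 + 1 by norm_num, pt_add_one, ptv6, pt_one]
  exact emH_mul_emH (by norm_num [qmul, qdouble, Prod.ext_iff])

lemma ptv8 : pt 12 8 = emH (-1, 0, 0, -1) := by
  rw [show (8:ℤ) = 7 + 1 by norm_num, pt_add_one, ptv7, pt_one]
  exact emH_mul_emH (by norm_num [qmul, qdouble, Prod.ext_iff])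

lemma ptv9 : pt 12 9 = emH (0, 0, -2, 0) := by
  rw [show (9:ℤ) = 8 + 1 by norm_num, pt_add_one, ptv8, pt_one]
  exact emH_mul_emH (by norm_num [qmul, qdouble, Prod.ext_iff])

lemma ptv10 : pt 12 10 = emH (1, 0, 0, -1) := by
  rw [show (10:ℤ) = 9 + 1 by norm_num, pt_add_one, ptv9, pt_one]
  exact emH_mul_emH (by norm_num [qmul, qdouble, Prod.ext_iff])

lemma ptv11 : pt 12 11 = emH (0, 1, -1, 0) := by
  rw [show (11:ℤ) = 10 + 1 by norm_num, pt_add_one, ptv10, pt_one]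
  exact emH_mul_emH (by norm_num [qmul, qdouble, Prod.ext_iff])

lemma ptm2 : pt 12 (-2) = emH (1, 0, 0, -1) := by
  rw [show (-2:ℤ) = 10 - 12 by norm_num, pt_sub_twelve, ptv10]

lemma ptm4 : pt 12 (-4) = emH (-1, 0, 0, -1) := by
  rw [show (-4:ℤ) = 8 - 12 by norm_num, pt_sub_twelve, ptv8]

lemma ptm6 : pt 12 (-6) = emH (-2, 0, 0, 0) := by
  rw [show (-6:ℤ) = 6 - 12 by norm_num, pt_sub_twelve, ptv6]

lemma ptm8 : pt 12 (-8) = emH (-1, 0, 0, 1) := by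
  rw [show (-8:ℤ) = 4 - 12 by norm_num, pt_sub_twelve, ptv4]

lemma ptm10 : pt 12 (-10) = emH (1, 0, 0, 1) := by
  rw [show (-10:ℤ) = 2 - 12 by norm_num, pt_sub_twelve, ptv2]

lemma ptm12 : pt 12 (-12) = emH (2, 0, 0, 0) := by
  rw [show (-12:ℤ) = 0 - 12 by norm_num, pt_sub_twelve, pt_zero]

lemma ptm14 : pt 12 (-14) = emH (1, 0, 0, -1) := by
  rw [show (-14:ℤ) = -2 - 12 by norm_num, pt_sub_twelve, ptm2]

lemma ptm16 : pt 12 (-16) = emH (-1, 0, 0, -1) := by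
  rw [show (-16:ℤ) = -4 - 12 by norm_num, pt_sub_twelve, ptm4]

lemma memFP0 (z : ℂ) : z ∈ FPline 12 0 ↔
    (starRingEnd ℂ) (emH (-4, 0, 0, 0)) * (z - emH (2, 0, 0, 0)) =
      emH (-4, 0, 0, 0) * ((starRingEnd ℂ) z - (starRingEnd ℂ) (emH (2, 0, 0, 0))) := by
  have hL : FPline 12 0 = lineL 12 0 (6) := by unfold FPline; norm_num
  have hdir : dirL 12 0 (6) = emH (-4, 0, 0, 0) := by
    rw [dirL, if_neg (show pt 12 0 ≠ pt 12 (6) by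
      rw [pt_zero, ptv6]
      intro hc
      exact absurd (emH_inj hc) (by norm_num [Prod.ext_iff])), ptv6, pt_zero, ← emH_sub]
    exact congrArg emH (by norm_num [qsub, Prod.ext_iff])
  rw [hL]
  simp only [lineL, Set.mem_setOf_eq, hdir, pt_zero]
  exact mem_line_iff (emH_ne_zero (by norm_num [Prod.ext_iff])) _ z

lemma memFP1 (z : ℂ) : z ∈ FPline 12 1 ↔
    (starRingEnd ℂ) (emH (-1, -1, -1, 1)) * (z - emH (0, 1, 1, 0)) =
      emH (-1, -1, -1, 1) * ((starRingEnd ℂ) z - (starRingEnd ℂ) (emH (0, 1, 1, 0))) := by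
  have hL : FPline 12 1 = lineL 12 1 (4) := by unfold FPline; norm_num
  have hdir : dirL 12 1 (4) = emH (-1, -1, -1, 1) := by
    rw [dirL, if_neg (show pt 12 1 ≠ pt 12 (4) by
      rw [pt_one, ptv4]
      intro hc
      exact absurd (emH_inj hc) (by norm_num [Prod.ext_iff])), ptv4, pt_one, ← emH_sub]
    exact congrArg emH (by norm_num [qsub, Prod.ext_iff])
  rw [hL]
  simp only [lineL, Set.mem_setOf_eq, hdir, pt_one]
  exact mem_line_iff (emH_ne_zero (by norm_num [Prod.ext_iff])) _ z

lemma memFP2 (z : ℂ) : z ∈ FPline 12 2 ↔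
    (starRingEnd ℂ) (emH (0, -1, 1, 0)) * (z - emH (1, 0, 0, 1)) =
      emH (0, -1, 1, 0) * ((starRingEnd ℂ) z - (starRingEnd ℂ) (emH (1, 0, 0, 1))) := by
  have hL : FPline 12 2 = lineL 12 2 (2) := by unfold FPline; norm_num
  have hdir : dirL 12 2 (2) = emH (0, -1, 1, 0) := by
    rw [dirL, if_pos rfl, ptv2,
      show Complex.I = emZ (0,0,1,0) by simp [emZ], emZ_mul_emH]
    exact congrArg emH (by norm_num [qmul, Prod.ext_iff])
  rw [hL]
  simp only [lineL, Set.mem_setOf_eq, hdir, ptv2]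
  exact mem_line_iff (emH_ne_zero (by norm_num [Prod.ext_iff])) _ z

lemma memFP3 (z : ℂ) : z ∈ FPline 12 3 ↔
    (starRingEnd ℂ) (emH (2, 0, -2, 0)) * (z - emH (0, 0, 2, 0)) =
      emH (2, 0, -2, 0) * ((starRingEnd ℂ) z - (starRingEnd ℂ) (emH (0, 0, 2, 0))) := by
  have hL : FPline 12 3 = lineL 12 3 (0) := by unfold FPline; norm_num
  have hdir : dirL 12 3 (0) = emH (2, 0, -2, 0) := by
    rw [dirL, if_neg (show pt 12 3 ≠ pt 12 (0) by
      rw [ptv3, pt_zero]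
      intro hc
      exact absurd (emH_inj hc) (by norm_num [Prod.ext_iff])), pt_zero, ptv3, ← emH_sub]
    exact congrArg emH (by norm_num [qsub, Prod.ext_iff])
  rw [hL]
  simp only [lineL, Set.mem_setOf_eq, hdir, ptv3]
  exact mem_line_iff (emH_ne_zero (by norm_num [Prod.ext_iff])) _ z

lemma memFP4 (z : ℂ) : z ∈ FPline 12 4 ↔
    (starRingEnd ℂ) (emH (2, 0, 0, -2)) * (z - emH (-1, 0, 0, 1)) =
      emH (2, 0, 0, -2) * ((starRingEnd ℂ) z - (starRingEnd ℂ) (emH (-1, 0, 0, 1))) := by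
  have hL : FPline 12 4 = lineL 12 4 (-2) := by unfold FPline; norm_num
  have hdir : dirL 12 4 (-2) = emH (2, 0, 0, -2) := by
    rw [dirL, if_neg (show pt 12 4 ≠ pt 12 (-2) by
      rw [ptv4, ptm2]
      intro hc
      exact absurd (emH_inj hc) (by norm_num [Prod.ext_iff])), ptm2, ptv4, ← emH_sub]
    exact congrArg emH (by norm_num [qsub, Prod.ext_iff])
  rw [hL]
  simp only [lineL, Set.mem_setOf_eq, hdir, ptv4]
  exact mem_line_iff (emH_ne_zero (by norm_num [Prod.ext_iff])) _ z

lemma memFP5 (z : ℂ) : z ∈ FPline 12 5 ↔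
    (starRingEnd ℂ) (emH (-1, 1, -1, -1)) * (z - emH (0, -1, 1, 0)) =
      emH (-1, 1, -1, -1) * ((starRingEnd ℂ) z - (starRingEnd ℂ) (emH (0, -1, 1, 0))) := by
  have hL : FPline 12 5 = lineL 12 5 (-4) := by unfold FPline; norm_num
  have hdir : dirL 12 5 (-4) = emH (-1, 1, -1, -1) := by
    rw [dirL, if_neg (show pt 12 5 ≠ pt 12 (-4) by
      rw [ptv5, ptm4]
      intro hc
      exact absurd (emH_inj hc) (by norm_num [Prod.ext_iff])), ptm4, ptv5, ← emH_sub]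
    exact congrArg emH (by norm_num [qsub, Prod.ext_iff])
  rw [hL]
  simp only [lineL, Set.mem_setOf_eq, hdir, ptv5]
  exact mem_line_iff (emH_ne_zero (by norm_num [Prod.ext_iff])) _ z

lemma memFP6 (z : ℂ) : z ∈ FPline 12 6 ↔
    (starRingEnd ℂ) (emH (0, 0, -2, 0)) * (z - emH (-2, 0, 0, 0)) =
      emH (0, 0, -2, 0) * ((starRingEnd ℂ) z - (starRingEnd ℂ) (emH (-2, 0, 0, 0))) := by
  have hL : FPline 12 6 = lineL 12 6 (-6) := by unfold FPline; norm_num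
  have hdir : dirL 12 6 (-6) = emH (0, 0, -2, 0) := by
    rw [dirL, if_pos (by rw [ptv6, ptm6]), ptv6,
      show Complex.I = emZ (0,0,1,0) by simp [emZ], emZ_mul_emH]
    exact congrArg emH (by norm_num [qmul, Prod.ext_iff])
  rw [hL]
  simp only [lineL, Set.mem_setOf_eq, hdir, ptv6]
  exact mem_line_iff (emH_ne_zero (by norm_num [Prod.ext_iff])) _ z

lemma memFP7 (z : ℂ) : z ∈ FPline 12 7 ↔
    (starRingEnd ℂ) (emH (-1, 1, 1, 1)) * (z - emH (0, -1, -1, 0)) =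
      emH (-1, 1, 1, 1) * ((starRingEnd ℂ) z - (starRingEnd ℂ) (emH (0, -1, -1, 0))) := by
  have hL : FPline 12 7 = lineL 12 7 (-8) := by unfold FPline; norm_num
  have hdir : dirL 12 7 (-8) = emH (-1, 1, 1, 1) := by
    rw [dirL, if_neg (show pt 12 7 ≠ pt 12 (-8) by
      rw [ptv7, ptm8]
      intro hc
      exact absurd (emH_inj hc) (by norm_num [Prod.ext_iff])), ptm8, ptv7, ← emH_sub]
    exact congrArg emH (by norm_num [qsub, Prod.ext_iff])
  rw [hL]
  simp only [lineL, Set.mem_setOf_eq, hdir, ptv7]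
  exact mem_line_iff (emH_ne_zero (by norm_num [Prod.ext_iff])) _ z

lemma memFP8 (z : ℂ) : z ∈ FPline 12 8 ↔
    (starRingEnd ℂ) (emH (2, 0, 0, 2)) * (z - emH (-1, 0, 0, -1)) =
      emH (2, 0, 0, 2) * ((starRingEnd ℂ) z - (starRingEnd ℂ) (emH (-1, 0, 0, -1))) := by
  have hL : FPline 12 8 = lineL 12 8 (-10) := by unfold FPline; norm_num
  have hdir : dirL 12 8 (-10) = emH (2, 0, 0, 2) := by
    rw [dirL, if_neg (show pt 12 8 ≠ pt 12 (-10) by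
      rw [ptv8, ptm10]
      intro hc
      exact absurd (emH_inj hc) (by norm_num [Prod.ext_iff])), ptm10, ptv8, ← emH_sub]
    exact congrArg emH (by norm_num [qsub, Prod.ext_iff])
  rw [hL]
  simp only [lineL, Set.mem_setOf_eq, hdir, ptv8]
  exact mem_line_iff (emH_ne_zero (by norm_num [Prod.ext_iff])) _ z

lemma memFP9 (z : ℂ) : z ∈ FPline 12 9 ↔
    (starRingEnd ℂ) (emH (2, 0, 2, 0)) * (z - emH (0, 0, -2, 0)) =
      emH (2, 0, 2, 0) * ((starRingEnd ℂ) z - (starRingEnd ℂ) (emH (0, 0, -2, 0))) := by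
  have hL : FPline 12 9 = lineL 12 9 (-12) := by unfold FPline; norm_num
  have hdir : dirL 12 9 (-12) = emH (2, 0, 2, 0) := by
    rw [dirL, if_neg (show pt 12 9 ≠ pt 12 (-12) by
      rw [ptv9, ptm12]
      intro hc
      exact absurd (emH_inj hc) (by norm_num [Prod.ext_iff])), ptm12, ptv9, ← emH_sub]
    exact congrArg emH (by norm_num [qsub, Prod.ext_iff])
  rw [hL]
  simp only [lineL, Set.mem_setOf_eq, hdir, ptv9]
  exact mem_line_iff (emH_ne_zero (by norm_num [Prod.ext_iff])) _ z

lemma memFP10 (z : ℂ) : z ∈ FPline 12 10 ↔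
    (starRingEnd ℂ) (emH (0, 1, 1, 0)) * (z - emH (1, 0, 0, -1)) =
      emH (0, 1, 1, 0) * ((starRingEnd ℂ) z - (starRingEnd ℂ) (emH (1, 0, 0, -1))) := by
  have hL : FPline 12 10 = lineL 12 10 (-14) := by unfold FPline; norm_num
  have hdir : dirL 12 10 (-14) = emH (0, 1, 1, 0) := by
    rw [dirL, if_pos (by rw [ptv10, ptm14]), ptv10,
      show Complex.I = emZ (0,0,1,0) by simp [emZ], emZ_mul_emH]
    exact congrArg emH (by norm_num [qmul, Prod.ext_iff])
  rw [hL]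
  simp only [lineL, Set.mem_setOf_eq, hdir, ptv10]
  exact mem_line_iff (emH_ne_zero (by norm_num [Prod.ext_iff])) _ z

lemma memFP11 (z : ℂ) : z ∈ FPline 12 11 ↔
    (starRingEnd ℂ) (emH (-1, -1, 1, -1)) * (z - emH (0, 1, -1, 0)) =
      emH (-1, -1, 1, -1) * ((starRingEnd ℂ) z - (starRingEnd ℂ) (emH (0, 1, -1, 0))) := by
  have hL : FPline 12 11 = lineL 12 11 (-16) := by unfold FPline; norm_num
  have hdir : dirL 12 11 (-16) = emH (-1, -1, 1, -1) := by
    rw [dirL, if_neg (show pt 12 11 ≠ pt 12 (-16) by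
      rw [ptv11, ptm16]
      intro hc
      exact absurd (emH_inj hc) (by norm_num [Prod.ext_iff])), ptm16, ptv11, ← emH_sub]
    exact congrArg emH (by norm_num [qsub, Prod.ext_iff])
  rw [hL]
  simp only [lineL, Set.mem_setOf_eq, hdir, ptv11]
  exact mem_line_iff (emH_ne_zero (by norm_num [Prod.ext_iff])) _ z

def pD : Fin 12 → Z4
  | 0 => (2, 0, 0, 0)
  | 1 => (0, 1, 1, 0)
  | 2 => (1, 0, 0, 1)
  | 3 => (0, 0, 2, 0)
  | 4 => (-1, 0, 0, 1)
  | 5 => (0, -1, 1, 0)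
  | 6 => (-2, 0, 0, 0)
  | 7 => (0, -1, -1, 0)
  | 8 => (-1, 0, 0, -1)
  | 9 => (0, 0, -2, 0)
  | 10 => (1, 0, 0, -1)
  | 11 => (0, 1, -1, 0)

def dD : Fin 12 → Z4
  | 0 => (-4, 0, 0, 0)
  | 1 => (-1, -1, -1, 1)
  | 2 => (0, -1, 1, 0)
  | 3 => (2, 0, -2, 0)
  | 4 => (2, 0, 0, -2)
  | 5 => (-1, 1, -1, -1)
  | 6 => (0, 0, -2, 0)
  | 7 => (-1, 1, 1, 1)
  | 8 => (2, 0, 0, 2)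
  | 9 => (2, 0, 2, 0)
  | 10 => (0, 1, 1, 0)
  | 11 => (-1, -1, 1, -1)

def qTab : List Z4 := [
  (0, 0, 0, 0),
  (2, 2, 0, 0),
  (4, 0, 0, 0),
  (2, 0, 0, 0),
  (0, 0, 0, 0),
  (2, -2, 0, 0),
  (-2, 0, 0, 0),
  (2, -2, 0, 0),
  (0, 0, 0, 0),
  (2, 0, 0, 0),
  (4, 0, 0, 0),
  (2, 2, 0, 0),
  (2, 2, 0, 0),
  (0, 0, 0, 0),
  (1, 1, -1, 1),
  (-1, 1, 3, -1),
  (-1, 0, 0, 1),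
  (-2, 0, 2, 0),
  (-2, 0, 2, 0),
  (-1, 0, 0, 1),
  (-1, 1, 3, -1),
  (1, 1, -1, 1),
  (1, 2, 2, -1),
  (2, 2, 0, 0),
  (4, 0, 0, 0),
  (1, 1, -1, 1),
  (0, 0, 0, 0),
  (1, -1, 1, 1),
  (-2, 0, 0, 2),
  (1, -2, 2, 1),
  (-2, 0, 0, 2),
  (1, -1, 1, 1),
  (1, 0, 0, 1),
  (1, 1, -1, 1),
  (4, 0, 0, 0),
  (1, 2, -2, 1),
  (2, 0, 0, 0),
  (-1, 1, 3, -1),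
  (1, -1, 1, 1),
  (0, 0, 0, 0),
  (-1, -1, 3, 1),
  (-1, -1, 3, 1),
  (-2, 0, 4, 0),
  (1, -1, 1, 1),
  (-1, 1, 3, -1),
  (2, 0, 0, 0),
  (1, 1, 1, -1),
  (1, 1, 1, -1),
  (0, 0, 0, 0),
  (-1, 0, 0, 1),
  (-2, 0, 0, 2),
  (-1, -1, 3, 1),
  (0, 0, 0, 0),
  (-1, -1, 3, 1),
  (-2, 0, 0, 2),
  (-1, 0, 0, 1),
  (0, 0, 0, 0),
  (-1, 1, -3, 1),
  (1, 0, 0, -1),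
  (-1, 1, -3, 1),
  (2, -2, 0, 0),
  (-2, 0, 2, 0),
  (1, -2, 2, 1),
  (-1, -1, 3, 1),
  (-1, -1, 3, 1),
  (0, 0, 0, 0),
  (-2, 0, 2, 0),
  (2, -2, 0, 0),
  (-1, 0, 0, -1),
  (1, -1, -1, -1),
  (1, -1, -1, -1),
  (-1, 0, 0, -1),
  (-2, 0, 0, 0),
  (-2, 0, 2, 0),
  (-2, 0, 0, 2),
  (-2, 0, 4, 0),
  (-2, 0, 0, 2),
  (-2, 0, 2, 0),
  (0, 0, 0, 0),
  (-2, 0, -2, 0),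
  (-2, 0, 0, -2),
  (-2, 0, -4, 0),
  (-2, 0, 0, -2),
  (-2, 0, -2, 0),
  (2, -2, 0, 0),
  (-1, 0, 0, 1),
  (1, -1, 1, 1),
  (1, -1, 1, 1),
  (-1, 0, 0, 1),
  (2, -2, 0, 0),
  (-2, 0, -2, 0),
  (0, 0, 0, 0),
  (-1, -1, -3, -1),
  (-1, -1, -3, -1),
  (1, -2, -2, -1),
  (-2, 0, -2, 0),
  (0, 0, 0, 0),
  (-1, 1, 3, -1),
  (1, 0, 0, 1),
  (-1, 1, 3, -1),
  (0, 0, 0, 0),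
  (-1, 0, 0, -1),
  (-2, 0, 0, -2),
  (-1, -1, -3, -1),
  (0, 0, 0, 0),
  (-1, -1, -3, -1),
  (-2, 0, 0, -2),
  (-1, 0, 0, -1),
  (2, 0, 0, 0),
  (1, 1, -1, 1),
  (1, 1, -1, 1),
  (2, 0, 0, 0),
  (-1, 1, -3, 1),
  (1, -1, -1, -1),
  (-2, 0, -4, 0),
  (-1, -1, -3, -1),
  (-1, -1, -3, -1),
  (0, 0, 0, 0),
  (1, -1, -1, -1),
  (-1, 1, -3, 1),
  (4, 0, 0, 0),
  (1, 2, 2, -1),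
  (4, 0, 0, 0),
  (1, 1, 1, -1),
  (1, 0, 0, -1),
  (1, -1, -1, -1),
  (-2, 0, 0, -2),
  (1, -2, -2, -1),
  (-2, 0, 0, -2),
  (1, -1, -1, -1),
  (0, 0, 0, 0),
  (1, 1, 1, -1),
  (2, 2, 0, 0),
  (2, 2, 0, 0),
  (1, 2, -2, 1),
  (1, 1, 1, -1),
  (-1, 1, -3, 1),
  (-1, 0, 0, -1),
  (-2, 0, -2, 0),
  (-2, 0, -2, 0),
  (-1, 0, 0, -1),
  (-1, 1, -3, 1),
  (1, 1, 1, -1),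
  (0, 0, 0, 0)
]

def qD (i j : Fin 12) : Z4 := qTab.getD (i.val * 12 + j.val) (0,0,0,0)

def onZ (q : Z4) (i : Fin 12) : Prop :=
  qmul (qconj (dD i)) (qsub q (pD i)) = qmul (dD i) (qsub (qconj q) (qconj (pD i)))

instance (q : Z4) (i : Fin 12) : Decidable (onZ q i) := by unfold onZ; infer_instance

def SQ (q : Z4) : Finset (Fin 12) := Finset.univ.filter (fun i => onZ q i)

lemma mem_SQ (q : Z4) (i : Fin 12) : i ∈ SQ q ↔ onZ q i := by simp [SQ]

lemma memFP (i : Fin 12) (z : ℂ) :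
    z ∈ FPline 12 ((i:ℕ):ℤ) ↔
    (starRingEnd ℂ) (emH (dD i)) * (z - emH (pD i)) =
      emH (dD i) * ((starRingEnd ℂ) z - (starRingEnd ℂ) (emH (pD i))) := by
  fin_cases i
  exacts [memFP0 z, memFP1 z, memFP2 z, memFP3 z, memFP4 z, memFP5 z, memFP6 z,
    memFP7 z, memFP8 z, memFP9 z, memFP10 z, memFP11 z]

lemma bridge (q : Z4) (i : Fin 12) : emH q ∈ FPline 12 ((i:ℕ):ℤ) ↔ onZ q i := by
  rw [memFP]
  simp only [emH_conj, ← emH_sub, emH_mul4]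
  rw [div_eq_div_iff (by norm_num) (by norm_num)]
  constructor
  · intro h
    exact emZ_inj (mul_right_cancel₀ (by norm_num : (4:ℂ) ≠ 0) h)
  · intro h
    rw [onZ] at h
    rw [h]

lemma S_set (q : Z4) : {i : Fin 12 | emH q ∈ FPline 12 ((i:ℕ):ℤ)} = ↑(SQ q) := by
  ext i
  simp [SQ, bridge q i]

def trip : Finset Z4 := {
  (-2, 0, -2, 0),
  (-2, 0, 0, -2),
  (-2, 0, 0, 2),
  (-2, 0, 2, 0),
  (-1, -1, -3, -1),
  (-1, -1, 3, 1),
  (-1, 0, 0, -1),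
  (-1, 0, 0, 1),
  (-1, 1, -3, 1),
  (-1, 1, 3, -1),
  (0, 0, 0, 0),
  (1, -1, -1, -1),
  (1, -1, 1, 1),
  (1, 1, -1, 1),
  (1, 1, 1, -1),
  (2, -2, 0, 0),
  (2, 0, 0, 0),
  (2, 2, 0, 0),
  (4, 0, 0, 0)
}

lemma F1 : ∀ i j : Fin 12, i ≠ j → onZ (qD i j) i ∧ onZ (qD i j) j := by decide
lemma F2 : ∀ i j : Fin 12, i ≠ j →
    qsub (qmul (qconj (dD i)) (dD j)) (qmul (dD i) (qconj (dD j))) ≠ (0,0,0,0) := by decide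
lemma F3 : ∀ q ∈ trip, (SQ q).card = 3 := by decide
lemma F4 : ∀ i j : Fin 12, i ≠ j → (SQ (qD i j)).card = 3 → qD i j ∈ trip := by decide
lemma F5 : trip.card = 19 := by decide
lemma F6 : ∀ i : Fin 12, (trip.filter (fun q => i ∈ SQ q)).card =
    if (i:ℕ) = 2 ∨ (i:ℕ) = 6 ∨ (i:ℕ) = 10 then 4 else 5 := by decide

lemma two_lines (i j : Fin 12) (hij : i ≠ j) (z : ℂ)
    (h1 : z ∈ FPline 12 ((i:ℕ):ℤ)) (h2 : z ∈ FPline 12 ((j:ℕ):ℤ)) : z = emH (qD i j) := by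
  have k1 : emH (qD i j) ∈ FPline 12 ((i:ℕ):ℤ) := (bridge _ i).mpr (F1 i j hij).1
  have k2 : emH (qD i j) ∈ FPline 12 ((j:ℕ):ℤ) := (bridge _ j).mpr (F1 i j hij).2
  refine eq_of_two ((memFP i z).mp h1) ((memFP j z).mp h2)
    ((memFP i _).mp k1) ((memFP j _).mp k2) ?_
  have hD := F2 i j hij
  have hrw : (starRingEnd ℂ) (emH (dD i)) * emH (dD j) - emH (dD i) * (starRingEnd ℂ) (emH (dD j))
      = emZ (qsub (qmul (qconj (dD i)) (dD j)) (qmul (dD i) (qconj (dD j)))) / 4 := by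
    rw [emZ_sub, emH_conj, emH_conj, emH_mul4, emH_mul4]
    ring
  rw [hrw]
  intro hc
  apply hD
  apply emZ_inj
  rw [emZ_zero]
  exact div_eq_zero_iff.mp hc |>.resolve_right (by norm_num)

lemma key_eq : {z : ℂ | {i : Fin 12 | z ∈ FPline 12 ((i:ℕ):ℤ)}.ncard = 3} = emH '' ↑trip := by
  apply Set.Subset.antisymm
  · intro z hz
    simp only [Set.mem_setOf_eq] at hz
    have h2 : 1 < {i : Fin 12 | z ∈ FPline 12 ((i:ℕ):ℤ)}.ncard := by omega
    obtain ⟨i, hi, j, hj, hij⟩ := (Set.one_lt_ncard (Set.toFinite _)).mp h2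
    simp only [Set.mem_setOf_eq] at hi hj
    have hzq : z = emH (qD i j) := two_lines i j hij z hi hj
    rw [hzq, S_set, Set.ncard_coe_finset] at hz
    exact ⟨qD i j, F4 i j hij hz, hzq.symm⟩
  · rintro z ⟨q, hq, rfl⟩
    simp only [Set.mem_setOf_eq]
    rw [S_set, Set.ncard_coe_finset]
    exact F3 q (Finset.mem_coe.mp hq)

lemma perline (i : Fin 12) :
    {z ∈ emH '' ↑trip | z ∈ FPline 12 ((i:ℕ):ℤ)} =
      emH '' ↑(trip.filter (fun q => i ∈ SQ q)) := by
  ext z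
  simp only [Set.mem_sep_iff, Set.mem_image, Finset.coe_filter, Set.mem_setOf_eq,
    Finset.mem_coe, Finset.mem_filter]
  constructor
  · rintro ⟨⟨q, hq, rfl⟩, hline⟩
    exact ⟨q, ⟨hq, (mem_SQ q i).mpr ((bridge q i).mp hline)⟩, rfl⟩
  · rintro ⟨q, ⟨hq, hiq⟩, rfl⟩
    exact ⟨⟨q, hq, rfl⟩, (bridge q i).mpr ((mem_SQ q i).mp hiq)⟩

end FP12

/-- In the Füredi–Palásti configuration of 12 lines there are exactly 19 triple points;
the three tangent lines `L_2, L_6, L_10` (the tangents to the unit circle at `P_2, P_6,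
P_10`) each contain exactly 4 triple points, and each of the remaining 9 lines contains
exactly 5 triple points. -/
theorem furedi_palasti_twelve_lines :
    let T : Set ℂ := {z : ℂ | {i : Fin 12 | z ∈ FPline 12 ((i : ℕ) : ℤ)}.ncard = 3}
    T.ncard = 19 ∧
      ∀ i : Fin 12,
        {z ∈ T | z ∈ FPline 12 ((i : ℕ) : ℤ)}.ncard =
          if (i : ℕ) = 2 ∨ (i : ℕ) = 6 ∨ (i : ℕ) = 10 then 4 else 5 := by
  intro T
  have hT : T = FP12.emH '' ↑FP12.trip := FP12.key_eq
  constructor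
  · rw [hT, Set.ncard_image_of_injective _ FP12.emH_inj, Set.ncard_coe_finset]
    exact FP12.F5
  · intro i
    have h : {z ∈ T | z ∈ FPline 12 ((i:ℕ):ℤ)} =
        FP12.emH '' ↑(FP12.trip.filter (fun q => i ∈ FP12.SQ q)) := by
      rw [hT]; exact FP12.perline i
    rw [h, Set.ncard_image_of_injective _ FP12.emH_inj, Set.ncard_coe_finset]
    exact FP12.F6 i

end
end
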